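/- arXiv:2107.03238 — 3 statements merged into one kernel-verified Lean document; each statement's English description precedes it below -/
import Mathlib

section
/- The set X = { z ↦ e^{−εz²} g(z) : ε>0, g ∈ A²(Π) } is a dense subspace of A²(Π), and for every f ∈ X and every η ∈ [−π,π] the Floquet series (2π)^{-1/2} Σ_{m∈ℤ} e^{−iηm} f(z+m) converges uniformly on compact subsets of the interior ϖ_U of cl(ϖ₋₁ ∪ ϖ ∪ ϖ₁) (where ϖ_m = ϖ+m), so that F f(·,η) is analytic on ϖ and extends analytically to a neighborhood in Π of cl(ϖ) ∩ Π. -/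
open Complex MeasureTheory Set Filter Topology

noncomputable section

def A2 (Ω : Set ℂ) : Set (ℂ → ℂ) :=
  {f | DifferentiableOn ℂ f Ω ∧ MemLp f 2 (volume.restrict Ω)}

def L2S (Ω : Set ℂ) : Set (ℂ → ℂ) :=
  {f | MemLp f 2 (volume.restrict Ω)}

def L2w (V : ℂ → ℝ) (Ω : Set ℂ) : Set (ℂ → ℂ) :=
  {f | AEStronglyMeasurable f (volume.restrict Ω) ∧
    IntegrableOn (fun z => ‖f z‖ ^ 2 * V z) Ω}

def A2w (V : ℂ → ℝ) (Ω : Set ℂ) : Set (ℂ → ℂ) :=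
  {f | DifferentiableOn ℂ f Ω ∧ IntegrableOn (fun z => ‖f z‖ ^ 2 * V z) Ω}

def PiDom (ϖ : Set ℂ) : Set ℂ :=
  interior (⋃ m : ℤ, closure ((fun z => z + (m : ℂ)) '' ϖ))

def Jplus (a b : ℝ) : Set ℂ := {z : ℂ | z.re = 1 ∧ z.im ∈ Ioo a b}
def Jminus (a b : ℝ) : Set ℂ := {z : ℂ | z.re = 0 ∧ z.im ∈ Ioo a b}

def cellOK (ϖ : Set ℂ) (M a b : ℝ) : Prop :=
  IsOpen ϖ ∧ IsConnected ϖ ∧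
  ϖ ⊆ {z : ℂ | 0 < z.re ∧ z.re < 1 ∧ -M < z.im ∧ z.im < M} ∧
  closure ϖ ∩ {z : ℂ | z.re = 0} = {z : ℂ | z.re = 0 ∧ z.im ∈ Icc a b} ∧
  closure ϖ ∩ {z : ℂ | z.re = 1} = {z : ℂ | z.re = 1 ∧ z.im ∈ Icc a b}

def Emap (z : ℂ) : ℂ := Complex.exp (2 * Real.pi * Complex.I * z)

def Dom (ϖ : Set ℂ) (a b : ℝ) : Set ℂ := Emap '' (ϖ ∪ Jplus a b ∪ Jminus a b)

def DomSlit (ϖ : Set ℂ) : Set ℂ := Emap '' ϖ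

def annulus (ρ : ℝ) : Set ℂ := {z : ℂ | 1 / ρ < ‖z‖ ∧ ‖z‖ < ρ}

def ConformalBijOn (f : ℂ → ℂ) (U V : Set ℂ) : Prop :=
  DifferentiableOn ℂ f U ∧ InjOn f U ∧ f '' U = V

def posReal : Set ℂ := {z : ℂ | z.im = 0 ∧ 0 < z.re}

def Gammacut (ϕ : ℂ → ℂ) (ϖ : Set ℂ) (a b : ℝ) : Set ℂ := ϕ '' (Dom ϖ a b ∩ posReal)

def AssumptionA (Γ : Set ℂ) : Prop :=
  ∃ δ : ℝ, 0 < δ ∧ δ < 1 ∧ Γ ⊆ {z : ℂ | δ < Complex.arg z ∧ Complex.arg z < Real.pi - δ}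

def BranchOn (logA ϕ : ℂ → ℂ) (ϖ : Set ℂ) (a b ρ : ℝ) : Prop :=
  (∀ z ∈ annulus ρ, Complex.exp (logA z) = z) ∧
  DifferentiableOn ℂ logA (annulus ρ \ Gammacut ϕ ϖ a b) ∧
  (∀ z ∈ annulus ρ, (logA z).im ∈ Icc 0 (3 * Real.pi)) ∧
  ∀ ζ ∈ Gammacut ϕ ϖ a b,
    Tendsto logA (𝓝[(ϕ ∘ Emap) '' (ϖ ∩ {z : ℂ | z.re < 1/2})] ζ)
      (𝓝 (logA ζ - 2 * Real.pi * Complex.I)) ∧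
    Tendsto logA (𝓝[(ϕ ∘ Emap) '' (ϖ ∩ {z : ℂ | 1/2 ≤ z.re})] ζ) (𝓝 (logA ζ))

def phiMap (logA ϕ : ℂ → ℂ) (z : ℂ) : ℂ :=
  (2 * Real.pi * Complex.I)⁻¹ * logA (ϕ (Emap z)) + (⌊z.re⌋ : ℂ)

def strip (c : ℝ) : Set ℂ := {z : ℂ | -c < z.im ∧ z.im < c}

def sech (z : ℂ) : ℂ := 2 / (Complex.exp z + Complex.exp (-z))

def Ktilde (logA ϕ : ℂ → ℂ) (z w : ℂ) : ℂ :=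
  Complex.exp (2 * Real.pi * Complex.I *
      (z - phiMap logA ϕ z - (starRingEnd ℂ) w + (starRingEnd ℂ) (phiMap logA ϕ w))) *
    deriv ϕ (Emap z) * (starRingEnd ℂ) (deriv ϕ (Emap w))

def KPi (logA ϕ : ℂ → ℂ) (ρ : ℝ) (z w : ℂ) : ℂ :=
  Ktilde logA ϕ z w * ((Real.pi : ℂ) ^ 3 / (4 * (Real.log ρ : ℂ) ^ 2)) *
    sech ((Real.pi : ℂ) ^ 2 * (phiMap logA ϕ z - (starRingEnd ℂ) (phiMap logA ϕ w)) /
      (2 * (Real.log ρ : ℂ))) ^ 2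

def A2ext (ϖ Pid : Set ℂ) (a b η : ℝ) : Set (ℂ → ℂ) :=
  {f | f ∈ A2 ϖ ∧ ∃ U F, IsOpen U ∧ U ⊆ Pid ∧ closure ϖ ∩ Pid ⊆ U ∧
    DifferentiableOn ℂ F U ∧ EqOn f F ϖ ∧
    ∀ y : ℝ, a < y → y < b →
      F (1 + y * Complex.I) = Complex.exp (η * Complex.I) * F (y * Complex.I)}

def A2eta (ϖ Pid : Set ℂ) (a b η : ℝ) : Set (ℂ → ℂ) :=
  {f | f ∈ A2 ϖ ∧ ∀ ε > 0, ∃ g ∈ A2ext ϖ Pid a b η, (∫ z in ϖ, ‖f z - g z‖ ^ 2) < ε}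

def floquetSum (f : ℂ → ℂ) (η : ℝ) (N : ℕ) (z : ℂ) : ℂ :=
  (Real.sqrt (2 * Real.pi) : ℂ)⁻¹ *
    ∑ m ∈ Finset.Icc (-(N : ℤ)) (N : ℤ),
      Complex.exp (-(Complex.I * (η : ℂ) * (m : ℂ))) * f (z + (m : ℂ))

def floquet (f : ℂ → ℂ) (z : ℂ) (η : ℝ) : ℂ :=
  (Real.sqrt (2 * Real.pi) : ℂ)⁻¹ *
    ∑' m : ℤ, Complex.exp (-(Complex.I * (η : ℂ) * (m : ℂ))) * f (z + (m : ℂ))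

def logD (z : ℂ) : ℂ :=
  if 0 < (Complex.log z).im then Complex.log z else Complex.log z + 2 * Real.pi * Complex.I

def Lmap (z : ℂ) : ℂ := (2 * Real.pi * Complex.I)⁻¹ * logD z

def Wweight (z : ℂ) : ℝ := 1 / (4 * Real.pi ^ 2 * (‖z‖) ^ 2)

def A2Weta (ϖ : Set ℂ) (a b η : ℝ) : Set (ℂ → ℂ) :=
  {f | f ∈ A2w Wweight (DomSlit ϖ) ∧ ∀ ε > 0, ∃ g ∈ A2w Wweight (Dom ϖ a b),
    (∫ z in DomSlit ϖ,
      ‖f z - Complex.exp (((η / (2 * Real.pi) : ℝ) : ℂ) * logD z) * g z‖ ^ 2 * Wweight z) < ε}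

def Vweight (ψ : ℂ → ℂ) (z : ℂ) : ℝ :=
  ‖deriv ψ z‖ ^ 2 / (4 * Real.pi ^ 2 * ‖ψ z‖ ^ 2)

def A2Veta (logA : ℂ → ℂ) (V : ℂ → ℝ) (Aslit Afull : Set ℂ) (η : ℝ) : Set (ℂ → ℂ) :=
  {f | f ∈ A2w V Aslit ∧ ∀ ε > 0, ∃ g ∈ A2w V Afull,
    (∫ z in Aslit,
      ‖f z - Complex.exp (((η / (2 * Real.pi) : ℝ) : ℂ) * logA z) * g z‖ ^ 2 * V z) < ε}


/-- The enlarged cell `ϖ_U`, the interior of `cl(ϖ₋₁ ∪ ϖ ∪ ϖ₁)`. -/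
def cellU (ϖ : Set ℂ) : Set ℂ :=
  interior (closure (((fun z => z + (-1 : ℂ)) '' ϖ) ∪ ϖ ∪ ((fun z => z + (1 : ℂ)) '' ϖ)))

/-- The subspace `X = { z ↦ e^{−εz²} g(z) : ε > 0, g ∈ A²(Π) }`. -/
def Xspace (ϖ : Set ℂ) : Set (ℂ → ℂ) :=
  {h | ∃ ε : ℝ, 0 < ε ∧ ∃ g ∈ A2 (PiDom ϖ),
    h = fun z => Complex.exp (-(ε : ℂ) * z ^ 2) * g z}

namespace Stmt4
open Metric

lemma piDom_open (ϖ : Set ℂ) : IsOpen (PiDom ϖ) := isOpen_interior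

lemma im_le {ϖ : Set ℂ} {M a b : ℝ} (hϖ : cellOK ϖ M a b) {z : ℂ}
    (hz : z ∈ PiDom ϖ) : |z.im| ≤ M := by
  have hsub : PiDom ϖ ⊆ ⋃ m : ℤ, closure ((fun z => z + (m : ℂ)) '' ϖ) := interior_subset
  obtain ⟨_, ⟨m, rfl⟩, hm⟩ := hsub hz
  have hcl : closure ((fun z => z + (m : ℂ)) '' ϖ) ⊆ {w : ℂ | |w.im| ≤ M} := by
    apply closure_minimal
    · rintro _ ⟨x, hx, rfl⟩
      have := hϖ.2.2.1 hx
      simp only [mem_setOf_eq] at this ⊢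
      rw [abs_le]
      constructor <;> simp [Complex.add_im] <;> linarith [this.2.2.1, this.2.2.2]
    · have : {w : ℂ | |w.im| ≤ M} = Complex.im ⁻¹' (Icc (-M) M) := by
        ext w; simp [abs_le]
      rw [this]
      exact isClosed_Icc.preimage Complex.continuous_im
  exact hcl hm

lemma norm_gauss_eq (ε : ℝ) (z : ℂ) :
    ‖Complex.exp (-(ε : ℂ) * z ^ 2)‖ = Real.exp (ε * (z.im ^ 2 - z.re ^ 2)) := by
  rw [Complex.norm_exp]
  congr 1
  simp [Complex.mul_re, pow_two]
  ring

lemma norm_gauss_le {ε M : ℝ} (hε : 0 ≤ ε) {z : ℂ} (hz : |z.im| ≤ M) :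
    ‖Complex.exp (-(ε : ℂ) * z ^ 2)‖ ≤ Real.exp (ε * M ^ 2) := by
  rw [norm_gauss_eq]
  apply Real.exp_le_exp.2
  have h1 : z.im ^ 2 ≤ M ^ 2 := sq_le_sq' (by linarith [abs_le.1 hz]) (abs_le.1 hz).2
  nlinarith [sq_nonneg z.re]

lemma gauss_mul_mem {ϖ : Set ℂ} {M a b : ℝ} (hϖ : cellOK ϖ M a b) {ε : ℝ} (hε : 0 ≤ ε)
    {g : ℂ → ℂ} (hg : g ∈ A2 (PiDom ϖ)) :
    (fun z => Complex.exp (-(ε : ℂ) * z ^ 2) * g z) ∈ A2 (PiDom ϖ) := by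
  have hdiff : Differentiable ℂ (fun z : ℂ => Complex.exp (-(ε : ℂ) * z ^ 2)) :=
    ((differentiable_pow 2).const_mul _).cexp
  refine ⟨(hdiff.differentiableOn).mul hg.1, ?_⟩
  refine MeasureTheory.MemLp.of_le_mul (c := Real.exp (ε * M ^ 2)) hg.2 ?_ ?_
  · exact (hdiff.continuous.aestronglyMeasurable).mul hg.2.1
  · refine MeasureTheory.ae_restrict_of_forall_mem (piDom_open ϖ).measurableSet fun z hz => ?_
    rw [norm_mul]
    exact mul_le_mul_of_nonneg_right (norm_gauss_le hε (im_le hϖ hz)) (norm_nonneg _)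

end Stmt4
namespace Stmt4
open Metric

lemma piDom_add_int {ϖ : Set ℂ} (m : ℤ) {z : ℂ} (hz : z ∈ PiDom ϖ) :
    z + (m : ℂ) ∈ PiDom ϖ := by
  set S : Set ℂ := ⋃ k : ℤ, closure ((fun z => z + (k : ℂ)) '' ϖ) with hS
  have himg : (fun w => w + (m : ℂ)) '' S = S := by
    rw [hS, image_iUnion]
    have hone : ∀ k : ℤ, (fun w => w + (m : ℂ)) '' closure ((fun z => z + (k : ℂ)) '' ϖ)
        = closure ((fun z => z + ((k + m : ℤ) : ℂ)) '' ϖ) := by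
      intro k
      have h1 : (fun w : ℂ => w + (m : ℂ)) '' closure ((fun z => z + (k : ℂ)) '' ϖ)
          = closure ((fun w : ℂ => w + (m : ℂ)) '' ((fun z => z + (k : ℂ)) '' ϖ)) :=
        (Homeomorph.addRight (m : ℂ)).image_closure _
      rw [h1, image_image]
      have : (fun x : ℂ => x + (k : ℂ) + (m : ℂ)) = fun z : ℂ => z + ((k + m : ℤ) : ℂ) := by
        funext x; push_cast; ring
      rw [this]
    simp_rw [hone]
    ext w
    simp only [mem_iUnion]
    constructor
    · rintro ⟨k, hk⟩; exact ⟨k + m, hk⟩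
    · rintro ⟨k, hk⟩
      refine ⟨k - m, ?_⟩
      rwa [sub_add_cancel]
  have : z + (m : ℂ) ∈ (fun w => w + (m : ℂ)) '' interior S := ⟨z, hz, rfl⟩
  have h2 : (fun w : ℂ => w + (m : ℂ)) '' interior S = interior ((fun w : ℂ => w + (m : ℂ)) '' S) :=
    (Homeomorph.addRight (m : ℂ)).image_interior _
  rw [h2, himg] at this
  exact this

lemma closure_translate_re {ϖ : Set ℂ} {M a b : ℝ} (hϖ : cellOK ϖ M a b) (k : ℤ) :
    closure ((fun z => z + (k : ℂ)) '' ϖ) ⊆ {z : ℂ | (k : ℝ) ≤ z.re ∧ z.re ≤ (k : ℝ) + 1} := by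
  apply closure_minimal
  · rintro _ ⟨x, hx, rfl⟩
    have := hϖ.2.2.1 hx
    simp only [mem_setOf_eq] at this ⊢
    simp only [Complex.add_re, Complex.intCast_re]
    constructor <;> linarith [this.1, this.2.1]
  · have : {z : ℂ | (k : ℝ) ≤ z.re ∧ z.re ≤ (k : ℝ) + 1} = Complex.re ⁻¹' (Icc (k : ℝ) ((k : ℝ) + 1)) := by
      ext w; simp [Icc]
    rw [this]
    exact isClosed_Icc.preimage Complex.continuous_re

lemma cell_subset_cellU (ϖ : Set ℂ) (hop : IsOpen ϖ) : ϖ ⊆ cellU ϖ :=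
  interior_maximal (fun z hz => subset_closure (Or.inl (Or.inr hz))) hop

lemma cellU_subset_piDom (ϖ : Set ℂ) : cellU ϖ ⊆ PiDom ϖ := by
  apply interior_mono
  rw [closure_union, closure_union]
  have hmem : ∀ k : ℤ, closure ((fun z => z + (k : ℂ)) '' ϖ)
      ⊆ ⋃ m : ℤ, closure ((fun z => z + (m : ℂ)) '' ϖ) := fun k => subset_iUnion (fun m : ℤ => closure ((fun z => z + (m : ℂ)) '' ϖ)) k
  have hm1 : closure ((fun z : ℂ => z + (-1 : ℂ)) '' ϖ)
      = closure ((fun z : ℂ => z + ((-1 : ℤ) : ℂ)) '' ϖ) := by push_cast; rfl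
  have h0 : closure ϖ = closure ((fun z : ℂ => z + ((0 : ℤ) : ℂ)) '' ϖ) := by
    simp
  have hp1 : closure ((fun z : ℂ => z + (1 : ℂ)) '' ϖ)
      = closure ((fun z : ℂ => z + ((1 : ℤ) : ℂ)) '' ϖ) := by push_cast; rfl
  intro w hw
  rcases hw with (hw | hw) | hw
  · exact hmem _ (hm1 ▸ hw)
  · exact hmem _ (h0 ▸ hw)
  · exact hmem _ (hp1 ▸ hw)

lemma closure_inter_subset_cellU {ϖ : Set ℂ} {M a b : ℝ} (hϖ : cellOK ϖ M a b) :
    closure ϖ ∩ PiDom ϖ ⊆ cellU ϖ := by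
  rintro z ⟨hzc, hzp⟩
  have hre : 0 ≤ z.re ∧ z.re ≤ 1 := by
    have := closure_translate_re hϖ 0 (by simpa using hzc)
    simpa using this
  obtain ⟨U, hUsub, hUopen, hzU⟩ := mem_interior.1 hzp
  set U' := U ∩ Complex.re ⁻¹' (Ioo (-1 : ℝ) 2) with hU'
  have hU'open : IsOpen U' := hUopen.inter (isOpen_Ioo.preimage Complex.continuous_re)
  have hzU' : z ∈ U' := ⟨hzU, by simp only [mem_preimage, mem_Ioo]; constructor <;> linarith [hre.1, hre.2]⟩
  have hU'sub : U' ⊆ closure (((fun z => z + (-1 : ℂ)) '' ϖ) ∪ ϖ ∪ ((fun z => z + (1 : ℂ)) '' ϖ)) := by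
    rintro w ⟨hwU, hwre⟩
    obtain ⟨_, ⟨k, rfl⟩, hk⟩ := hUsub hwU
    have hkre := closure_translate_re hϖ k hk
    simp only [mem_preimage, mem_Ioo] at hwre
    have hk1 : (-1 : ℝ) < (k : ℝ) + 1 := by linarith [hkre.1, hkre.2]
    have hk2 : (k : ℝ) < 2 := by linarith [hkre.1, hkre.2]
    have hk1' : (-2 : ℤ) < k := by exact_mod_cast (by linarith : (-2 : ℝ) < (k : ℝ))
    have hk2' : k < 2 := by exact_mod_cast hk2
    interval_cases k
    · simp only [Int.cast_neg, Int.cast_one] at hk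
      exact closure_mono (fun x hx => Or.inl (Or.inl hx)) hk
    · simp only [Int.cast_zero, add_zero, image_id'] at hk
      exact closure_mono (fun x hx => Or.inl (Or.inr hx)) hk
    · simp only [Int.cast_one] at hk
      exact closure_mono (fun x hx => Or.inr hx) hk
  exact mem_interior.2 ⟨U', hU'sub, hU'open, hzU'⟩

end Stmt4
namespace Stmt4
open Metric intervalIntegral

lemma circle_mean {g : ℂ → ℂ} {w : ℂ} {s : ℝ} (hs : 0 < s)
    (hd : DifferentiableOn ℂ g (closedBall w s)) :
    2 * Real.pi * ‖g w‖ ≤ ∫ θ in (0:ℝ)..(2 * Real.pi), ‖g (circleMap w s θ)‖ := by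
  have h := hd.circleIntegral_sub_inv_smul (mem_ball_self hs)
  rw [circleIntegral] at h
  have hptw : ∀ θ : ℝ, deriv (circleMap w s) θ • (circleMap w s θ - w)⁻¹ • g (circleMap w s θ)
      = Complex.I * g (circleMap w s θ) := by
    intro θ
    have hne : circleMap 0 s θ ≠ 0 := by
      simpa using circleMap_ne_center (c := (0:ℂ)) hs.ne' (θ := θ)
    rw [deriv_circleMap, circleMap_sub_center, smul_eq_mul, smul_eq_mul]
    field_simp
  simp_rw [hptw] at h
  rw [intervalIntegral.integral_const_mul, smul_eq_mul] at h
  have h2 : (∫ θ in (0:ℝ)..(2 * Real.pi), g (circleMap w s θ)) = ((2 * Real.pi : ℝ) : ℂ) * g w := by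
    apply mul_left_cancel₀ Complex.I_ne_zero
    rw [h]
    push_cast
    ring
  have h3 : ‖∫ θ in (0:ℝ)..(2 * Real.pi), g (circleMap w s θ)‖
      ≤ ∫ θ in (0:ℝ)..(2 * Real.pi), ‖g (circleMap w s θ)‖ :=
    intervalIntegral.norm_integral_le_integral_norm (by positivity)
  rw [h2] at h3
  calc 2 * Real.pi * ‖g w‖ = ‖((2 * Real.pi : ℝ) : ℂ) * g w‖ := by
        rw [norm_mul, Complex.norm_real, Real.norm_eq_abs, _root_.abs_of_nonneg (by positivity : (0:ℝ) ≤ 2 * Real.pi)]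
      _ ≤ _ := h3

end Stmt4
namespace Stmt4
open Metric intervalIntegral

lemma symm_polar (p : ℝ × ℝ) : Complex.polarCoord.symm p = (p.1 : ℂ) * Complex.exp (p.2 * Complex.I) := by
  rw [Complex.polarCoord_symm_apply, Complex.exp_mul_I]
  push_cast
  ring

lemma continuous_symm_polar : Continuous (fun p : ℝ × ℝ => Complex.polarCoord.symm p) := by
  simp only [symm_polar]
  fun_prop

lemma norm_symm_polar (p : ℝ × ℝ) : ‖Complex.polarCoord.symm p‖ = |p.1| := by
  rw [Complex.norm_polarCoord_symm]

lemma add_symm_polar (w : ℂ) (s θ : ℝ) :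
    w + Complex.polarCoord.symm (s, θ) = circleMap w s θ := by
  rw [symm_polar, circleMap]

lemma ball_mean {g : ℂ → ℂ} {w : ℂ} {r : ℝ} (hr : 0 < r)
    (hd : DifferentiableOn ℂ g (closedBall w r)) :
    Real.pi * r ^ 2 * ‖g w‖ ≤ ∫ z in ball w r, ‖g z‖ := by
  set n : ℂ → ℝ := (ball w r).indicator (fun z => ‖g z‖) with hn
  set H : ℝ × ℝ → ℝ := fun p => p.1 * ‖g (w + Complex.polarCoord.symm p)‖ with hH
  set S : Set (ℝ × ℝ) := Ioo (0:ℝ) r ×ˢ Ioo (-Real.pi) Real.pi with hSdef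
  have hSm : MeasurableSet S := measurableSet_Ioo.prod measurableSet_Ioo
  -- continuity & integrability of H on the compact rectangle
  have hHcont : ContinuousOn H (Icc (0:ℝ) r ×ˢ Icc (-Real.pi) Real.pi) := by
    apply ContinuousOn.mul continuous_fst.continuousOn
    apply ContinuousOn.norm
    apply hd.continuousOn.comp ((continuous_const.add continuous_symm_polar).continuousOn)
    intro p hp
    simp only [Pi.add_apply, mem_closedBall, dist_eq_norm, add_sub_cancel_left, norm_symm_polar]
    rw [_root_.abs_of_nonneg hp.1.1]
    exact hp.1.2
  have hHint : MeasureTheory.IntegrableOn H S := by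
    apply MeasureTheory.IntegrableOn.mono_set
      (hHcont.integrableOn_compact (isCompact_Icc.prod isCompact_Icc))
    exact prod_mono Ioo_subset_Icc_self Ioo_subset_Icc_self
  -- step 1: area integral equals integral over S of H
  have step1 : ∫ z in ball w r, ‖g z‖ = ∫ p in S, H p := by
    have e1 : ∫ z in ball w r, ‖g z‖ = ∫ z, n z := (MeasureTheory.integral_indicator measurableSet_ball).symm
    have e2 : ∫ z, n z = ∫ ζ, n (w + ζ) := (MeasureTheory.integral_add_left_eq_self n w).symm
    have e3 : ∫ ζ, n (w + ζ) = ∫ p in polarCoord.target, p.1 • n (w + Complex.polarCoord.symm p) :=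
      (Complex.integral_comp_polarCoord_symm (fun ζ => n (w + ζ))).symm
    have e4 : ∫ p in polarCoord.target, p.1 • n (w + Complex.polarCoord.symm p)
        = ∫ p in S, p.1 • n (w + Complex.polarCoord.symm p) := by
      apply MeasureTheory.setIntegral_eq_of_subset_of_forall_diff_eq_zero
        (polarCoord.open_target.measurableSet)
      · rw [polarCoord_target]
        exact prod_mono Ioo_subset_Ioi_self (subset_refl _)
      · rintro p ⟨hpt, hpS⟩
        rw [polarCoord_target] at hpt
        have hp1 : 0 < p.1 := hpt.1
        have hp2 : p.2 ∈ Ioo (-Real.pi) Real.pi := hpt.2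
        have : r ≤ p.1 := by
          by_contra hlt
          exact hpS ⟨⟨hp1, not_le.1 hlt⟩, hp2⟩
        have hout : w + Complex.polarCoord.symm p ∉ ball w r := by
          simp only [mem_ball, dist_eq_norm, add_sub_cancel_left, norm_symm_polar]
          rw [_root_.abs_of_pos hp1]
          exact not_lt.2 this
        show p.1 • ((ball w r).indicator (fun z => ‖g z‖)) (w + Complex.polarCoord.symm p) = 0
        rw [Set.indicator_of_notMem hout, smul_zero]
    have e5 : ∫ p in S, p.1 • n (w + Complex.polarCoord.symm p) = ∫ p in S, H p := by
      apply MeasureTheory.setIntegral_congr_fun hSm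
      rintro p ⟨hp1, hp2⟩
      have hin : w + Complex.polarCoord.symm p ∈ ball w r := by
        simp only [mem_ball, dist_eq_norm, add_sub_cancel_left, norm_symm_polar]
        rw [_root_.abs_of_pos hp1.1]
        exact hp1.2
      show p.1 • ((ball w r).indicator (fun z => ‖g z‖)) (w + Complex.polarCoord.symm p) = H p
      rw [Set.indicator_of_mem hin, smul_eq_mul]
    rw [e1, e2, e3, e4, e5]
  -- step 2: Fubini
  have hprodmeas : (volume : MeasureTheory.Measure (ℝ × ℝ)).restrict S
      = ((volume : MeasureTheory.Measure ℝ).restrict (Ioo (0:ℝ) r)).prod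
        ((volume : MeasureTheory.Measure ℝ).restrict (Ioo (-Real.pi) Real.pi)) := by
    rw [MeasureTheory.Measure.prod_restrict, hSdef, MeasureTheory.Measure.volume_eq_prod]
  have hHint' : MeasureTheory.Integrable H
      (((volume : MeasureTheory.Measure ℝ).restrict (Ioo (0:ℝ) r)).prod
        ((volume : MeasureTheory.Measure ℝ).restrict (Ioo (-Real.pi) Real.pi))) := by
    rw [← hprodmeas]; exact hHint
  have step2 : ∫ p in S, H p
      = ∫ s in Ioo (0:ℝ) r, ∫ θ in Ioo (-Real.pi) Real.pi, H (s, θ) := by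
    rw [show (∫ p in S, H p) = ∫ p, H p ∂((volume : MeasureTheory.Measure (ℝ × ℝ)).restrict S) from rfl,
      hprodmeas, MeasureTheory.integral_prod _ hHint']
  -- step 3: inner integral lower bound
  have step3 : ∀ s ∈ Ioo (0:ℝ) r,
      2 * Real.pi * ‖g w‖ * s ≤ ∫ θ in Ioo (-Real.pi) Real.pi, H (s, θ) := by
    intro s hs
    have hse : ∀ θ : ℝ, H (s, θ) = s * ‖g (circleMap w s θ)‖ := by
      intro θ; rw [hH]; simp only []; rw [add_symm_polar]
    have e6 : ∫ θ in Ioo (-Real.pi) Real.pi, H (s, θ)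
        = s * ∫ θ in (-Real.pi)..Real.pi, ‖g (circleMap w s θ)‖ := by
      simp_rw [hse]
      rw [← MeasureTheory.integral_Ioc_eq_integral_Ioo,
        ← intervalIntegral.integral_of_le (by linarith [Real.pi_pos] : -Real.pi ≤ Real.pi),
        ← intervalIntegral.integral_const_mul]
    have hper : Function.Periodic (fun θ : ℝ => ‖g (circleMap w s θ)‖) (2 * Real.pi) :=
      ((periodic_circleMap w s).comp fun z => ‖g z‖)
    have e7 : ∫ θ in (-Real.pi)..Real.pi, ‖g (circleMap w s θ)‖
        = ∫ θ in (0:ℝ)..(2 * Real.pi), ‖g (circleMap w s θ)‖ := by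
      have h := hper.intervalIntegral_add_eq (-Real.pi) 0
      rw [zero_add] at h
      rw [show -Real.pi + 2 * Real.pi = Real.pi by ring] at h
      exact h
    have hcirc := circle_mean hs.1 (hd.mono (closedBall_subset_closedBall hs.2.le))
    rw [e6, e7]
    calc 2 * Real.pi * ‖g w‖ * s = s * (2 * Real.pi * ‖g w‖) := by ring
      _ ≤ s * ∫ θ in (0:ℝ)..(2 * Real.pi), ‖g (circleMap w s θ)‖ :=
          mul_le_mul_of_nonneg_left hcirc hs.1.le
  -- step 4: outer integral
  have houter_int : MeasureTheory.IntegrableOn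
      (fun s => ∫ θ in Ioo (-Real.pi) Real.pi, H (s, θ)) (Ioo (0:ℝ) r) :=
    hHint'.integral_prod_left
  have hlin_int : MeasureTheory.IntegrableOn
      (fun s : ℝ => 2 * Real.pi * ‖g w‖ * s) (Ioo (0:ℝ) r) := by
    apply MeasureTheory.IntegrableOn.mono_set _ Ioo_subset_Icc_self
    exact (continuous_const.mul continuous_id).continuousOn.integrableOn_compact isCompact_Icc
  have step4 : ∫ s in Ioo (0:ℝ) r, (2 * Real.pi * ‖g w‖ * s)
      ≤ ∫ s in Ioo (0:ℝ) r, ∫ θ in Ioo (-Real.pi) Real.pi, H (s, θ) :=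
    MeasureTheory.setIntegral_mono_on hlin_int houter_int measurableSet_Ioo step3
  have step5 : ∫ s in Ioo (0:ℝ) r, (2 * Real.pi * ‖g w‖ * s) = Real.pi * r ^ 2 * ‖g w‖ := by
    rw [← MeasureTheory.integral_Ioc_eq_integral_Ioo,
      ← intervalIntegral.integral_of_le hr.le, intervalIntegral.integral_const_mul,
      integral_id]
    ring
  rw [step1, step2]
  rw [← step5]
  exact step4

end Stmt4
namespace Stmt4
open Metric intervalIntegral

lemma volume_ball_toReal (w : ℂ) {r : ℝ} (hr : 0 < r) :
    (volume (ball w r)).toReal = Real.pi * r ^ 2 := by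
  rw [Complex.volume_ball, ENNReal.toReal_mul, ENNReal.toReal_pow, ENNReal.toReal_ofReal hr.le]
  simp [mul_comm]

instance ball_finite (w : ℂ) (r : ℝ) :
    MeasureTheory.IsFiniteMeasure (volume.restrict (ball w r)) :=
  ⟨by rw [MeasureTheory.Measure.restrict_apply_univ]; exact measure_ball_lt_top⟩

lemma holder_ball {g : ℂ → ℂ} {w : ℂ} {r : ℝ} (hr : 0 < r)
    (hcont : ContinuousOn g (closedBall w r)) :
    ∫ z in ball w r, ‖g z‖
      ≤ Real.sqrt (∫ z in ball w r, ‖g z‖ ^ 2) * Real.sqrt (Real.pi * r ^ 2) := by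
  set μ := volume.restrict (ball w r) with hμ
  have hmeas : MeasureTheory.AEStronglyMeasurable (fun z => ‖g z‖) μ := by
    apply ContinuousOn.aestronglyMeasurable _ measurableSet_ball
    exact (hcont.mono ball_subset_closedBall).norm
  obtain ⟨C, hC⟩ := (isCompact_closedBall w r).exists_bound_of_continuousOn hcont
  have hmem : MeasureTheory.MemLp (fun z => ‖g z‖) (ENNReal.ofReal 2) μ := by
    refine MeasureTheory.MemLp.of_bound hmeas C ?_
    refine MeasureTheory.ae_restrict_of_forall_mem measurableSet_ball fun z hz => ?_
    rw [norm_norm]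
    exact hC z (ball_subset_closedBall hz)
  have hone : MeasureTheory.MemLp (fun _ : ℂ => (1:ℝ)) (ENNReal.ofReal 2) μ := memLp_const 1
  have h := MeasureTheory.integral_mul_le_Lp_mul_Lq_of_nonneg
    (Real.holderConjugate_iff.mpr ⟨one_lt_two, by norm_num⟩)
    (Filter.Eventually.of_forall fun z => norm_nonneg _)
    (Filter.Eventually.of_forall fun _ => zero_le_one) hmem hone
  simp only [mul_one, Real.rpow_two, one_pow] at h
  have hμball : ∫ _ : ℂ, (1:ℝ) ∂μ = Real.pi * r ^ 2 := by
    rw [hμ, MeasureTheory.setIntegral_const, smul_eq_mul, mul_one, MeasureTheory.measureReal_def, volume_ball_toReal w hr]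
  rw [hμball, ← Real.sqrt_eq_rpow, ← Real.sqrt_eq_rpow] at h
  exact h

lemma pointwise_bound {g : ℂ → ℂ} {U : Set ℂ} (hU : IsOpen U) (hd : DifferentiableOn ℂ g U)
    (hint : MeasureTheory.IntegrableOn (fun z => ‖g z‖ ^ 2) U) {w : ℂ} {r : ℝ} (hr : 0 < r)
    (hsub : closedBall w r ⊆ U) :
    ‖g w‖ ≤ Real.sqrt (∫ z in U, ‖g z‖ ^ 2) * Real.sqrt (Real.pi * r ^ 2) / (Real.pi * r ^ 2) := by
  have hd' : DifferentiableOn ℂ g (closedBall w r) := hd.mono hsub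
  have h1 := ball_mean hr hd'
  have h2 := holder_ball hr hd'.continuousOn
  have h3 : ∫ z in ball w r, ‖g z‖ ^ 2 ≤ ∫ z in U, ‖g z‖ ^ 2 := by
    apply MeasureTheory.setIntegral_mono_set hint
    · exact Filter.Eventually.of_forall fun z => by positivity
    · exact Filter.Eventually.of_forall fun z hz => hsub (ball_subset_closedBall hz)
  have h4 : Real.sqrt (∫ z in ball w r, ‖g z‖ ^ 2) ≤ Real.sqrt (∫ z in U, ‖g z‖ ^ 2) :=
    Real.sqrt_le_sqrt h3
  have hpos : 0 < Real.pi * r ^ 2 := by positivity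
  rw [le_div_iff₀ hpos]
  have hs : 0 ≤ Real.sqrt (Real.pi * r ^ 2) := Real.sqrt_nonneg _
  calc ‖g w‖ * (Real.pi * r ^ 2) = Real.pi * r ^ 2 * ‖g w‖ := by ring
    _ ≤ ∫ z in ball w r, ‖g z‖ := h1
    _ ≤ Real.sqrt (∫ z in ball w r, ‖g z‖ ^ 2) * Real.sqrt (Real.pi * r ^ 2) := h2
    _ ≤ Real.sqrt (∫ z in U, ‖g z‖ ^ 2) * Real.sqrt (Real.pi * r ^ 2) :=
        mul_le_mul_of_nonneg_right h4 hs

end Stmt4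
namespace Stmt4
open Metric Filter

lemma max_sq_ge (x : ℝ) : x - 1 ≤ max x 0 ^ 2 := by
  rcases le_or_gt x 0 with h | h
  · rw [max_eq_right h]; nlinarith
  · rw [max_eq_left h.le]; nlinarith

lemma summable_aux {ε R : ℝ} (hε : 0 < ε) (hR : 0 ≤ R) :
    Summable (fun m : ℤ => Real.exp (-(ε * max (|(m : ℝ)| - R) 0 ^ 2))) := by
  have hnat : ∀ v : ℕ → ℝ, (∀ n : ℕ, v n = Real.exp (-(ε * max ((n : ℝ) - R) 0 ^ 2))) →
      Summable v := by
    intro v hv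
    have hgeo : Summable (fun n : ℕ => Real.exp (ε * (R + 1)) * Real.exp (-ε) ^ n) :=
      (summable_geometric_of_lt_one (Real.exp_nonneg _)
        (Real.exp_lt_one_iff.2 (by linarith))).mul_left _
    apply Summable.of_nonneg_of_le (fun n => by rw [hv]; positivity) _ hgeo
    intro n
    rw [hv, ← Real.exp_nat_mul, ← Real.exp_add]
    apply Real.exp_le_exp.2
    have := max_sq_ge ((n : ℝ) - R)
    nlinarith [this, hε.le]
  apply Summable.of_nat_of_neg
  · apply hnat
    intro n
    norm_num
  · apply hnat
    intro n
    norm_num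

end Stmt4
namespace Stmt4
open Metric Filter

lemma exp_merge (u v : ℝ) (z gz : ℂ) :
    Complex.exp (-((u : ℝ) : ℂ) * z ^ 2) * (Complex.exp (-(((v - u : ℝ)) : ℂ) * z ^ 2) * gz)
      = Complex.exp (-((v : ℝ) : ℂ) * z ^ 2) * gz := by
  rw [← mul_assoc, ← Complex.exp_add]
  push_cast
  ring_nf

lemma integrableOn_norm_sq {Ω : Set ℂ} {f : ℂ → ℂ} (hf : MeasureTheory.MemLp f 2 (volume.restrict Ω)) :
    MeasureTheory.IntegrableOn (fun z => ‖f z‖ ^ 2) Ω := by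
  have := hf.integrable_norm_rpow two_ne_zero ENNReal.ofNat_ne_top
  simpa [ENNReal.toReal_ofNat, Real.rpow_two, MeasureTheory.IntegrableOn] using this

end Stmt4

open Stmt4 Metric

/-- `X` is a dense subspace of `A²(Π)`, and for every `f ∈ X` and every
`η ∈ [−π,π]` the Floquet series converges uniformly on compact subsets of `ϖ_U`, so that
`F f(·,η)` is analytic on `ϖ` and extends analytically to a neighborhood in `Π` of
`cl(ϖ) ∩ Π` (namely `ϖ_U`). -/
theorem statement4 (M a b : ℝ) (hM : 0 < M) (hab : a < b)
    (ϖ : Set ℂ) (hϖ : cellOK ϖ M a b) :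
    -- X is a subspace of A²(Π) ...
    (Xspace ϖ ⊆ A2 (PiDom ϖ)) ∧
    (∀ h₁ ∈ Xspace ϖ, ∀ h₂ ∈ Xspace ϖ, (fun z => h₁ z + h₂ z) ∈ Xspace ϖ) ∧
    (∀ c : ℂ, ∀ h ∈ Xspace ϖ, (fun z => c * h z) ∈ Xspace ϖ) ∧
    -- ... which is dense,
    (∀ f ∈ A2 (PiDom ϖ), ∀ δ > (0:ℝ), ∃ h ∈ Xspace ϖ,
      (∫ z in PiDom ϖ, ‖f z - h z‖ ^ 2) < δ) ∧
    -- ϖ_U is an open neighborhood in Π of cl(ϖ) ∩ Π containing ϖ,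
    (ϖ ⊆ cellU ϖ ∧ cellU ϖ ⊆ PiDom ϖ ∧ closure ϖ ∩ PiDom ϖ ⊆ cellU ϖ) ∧
    -- and for f ∈ X the Floquet series converges uniformly on compacts of ϖ_U,
    -- with analytic sum there.
    ∀ f ∈ Xspace ϖ, ∀ η ∈ Icc (-Real.pi) Real.pi,
      (∀ K : Set ℂ, K ⊆ cellU ϖ → IsCompact K →
        TendstoUniformlyOn (fun N z => floquetSum f η N z)
          (fun z => floquet f z η) atTop K) ∧
      DifferentiableOn ℂ (fun z => floquet f z η) (cellU ϖ) := by
  refine ⟨?_, ?_, ?_, ?_, ?_, ?_⟩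
  · -- subset
    rintro h ⟨ε, hε, g, hg, rfl⟩
    exact gauss_mul_mem hϖ hε.le hg
  · -- addition
    rintro h₁ ⟨ε₁, hε₁, g₁, hg₁, rfl⟩ h₂ ⟨ε₂, hε₂, g₂, hg₂, rfl⟩
    have hu₁ : (0:ℝ) ≤ ε₁ - min ε₁ ε₂ := sub_nonneg.2 (min_le_left _ _)
    have hu₂ : (0:ℝ) ≤ ε₂ - min ε₁ ε₂ := sub_nonneg.2 (min_le_right _ _)
    have m1 := gauss_mul_mem hϖ hu₁ hg₁
    have m2 := gauss_mul_mem hϖ hu₂ hg₂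
    refine ⟨min ε₁ ε₂, lt_min hε₁ hε₂,
      fun z => Complex.exp (-(((ε₁ - min ε₁ ε₂ : ℝ)) : ℂ) * z ^ 2) * g₁ z
        + Complex.exp (-(((ε₂ - min ε₁ ε₂ : ℝ)) : ℂ) * z ^ 2) * g₂ z,
      ⟨m1.1.add m2.1, m1.2.add m2.2⟩, ?_⟩
    funext z
    rw [mul_add, exp_merge (min ε₁ ε₂) ε₁ z (g₁ z), exp_merge (min ε₁ ε₂) ε₂ z (g₂ z)]
  · -- scalar
    rintro c h ⟨ε, hε, g, hg, rfl⟩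
    refine ⟨ε, hε, fun z => c * g z,
      ⟨(differentiableOn_const c).mul hg.1, hg.2.const_mul c⟩, ?_⟩
    funext z
    ring
  · -- density
    intro f hf δ hδ
    have hf2 : MeasureTheory.IntegrableOn (fun z => ‖f z‖ ^ 2) (PiDom ϖ) :=
      integrableOn_norm_sq hf.2
    have hfm := hf.2.aestronglyMeasurable
    have key : Filter.Tendsto
        (fun n : ℕ => ∫ z in PiDom ϖ,
          ‖f z - Complex.exp (-(((1 / (n + 1) : ℝ)) : ℂ) * z ^ 2) * f z‖ ^ 2)
        Filter.atTop (𝓝 (∫ _ in PiDom ϖ, (0:ℝ))) := by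
      apply MeasureTheory.tendsto_integral_of_dominated_convergence
        (bound := fun z => (1 + Real.exp (M ^ 2)) ^ 2 * ‖f z‖ ^ 2)
      · intro n
        have hc : Continuous fun z : ℂ => Complex.exp (-(((1 / (n + 1) : ℝ)) : ℂ) * z ^ 2) :=
          (((differentiable_pow (𝕜 := ℂ) 2).const_mul _).cexp).continuous
        exact ((hfm.sub (hc.aestronglyMeasurable.mul hfm)).norm.pow 2)
      · exact hf2.const_mul _
      · intro n
        refine MeasureTheory.ae_restrict_of_forall_mem (piDom_open ϖ).measurableSet fun z hz => ?_
        have hεn : (0:ℝ) ≤ 1 / (n + 1) := by positivity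
        have hεn1 : (1 / (n + 1) : ℝ) ≤ 1 := by
          rw [div_le_one (by positivity)]
          simp
        have hg1 : ‖Complex.exp (-(((1 / (n + 1) : ℝ)) : ℂ) * z ^ 2)‖ ≤ Real.exp (M ^ 2) := by
          refine (norm_gauss_le hεn (im_le hϖ hz)).trans ?_
          apply Real.exp_le_exp.2
          nlinarith [sq_nonneg M]
        have hfac : f z - Complex.exp (-(((1 / (n + 1) : ℝ)) : ℂ) * z ^ 2) * f z
            = (1 - Complex.exp (-(((1 / (n + 1) : ℝ)) : ℂ) * z ^ 2)) * f z := by ring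
        rw [Real.norm_eq_abs, _root_.abs_of_nonneg (by positivity), hfac, norm_mul, mul_pow]
        apply mul_le_mul_of_nonneg_right _ (by positivity)
        apply pow_le_pow_left₀ (norm_nonneg _)
        calc ‖1 - Complex.exp (-(((1 / (n + 1) : ℝ)) : ℂ) * z ^ 2)‖
            ≤ ‖(1:ℂ)‖ + ‖Complex.exp (-(((1 / (n + 1) : ℝ)) : ℂ) * z ^ 2)‖ := norm_sub_le _ _
          _ ≤ 1 + Real.exp (M ^ 2) := by rw [norm_one]; linarith
      · refine Filter.Eventually.of_forall fun z => ?_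
        have h1 : Filter.Tendsto (fun n : ℕ => (((1 / (n + 1) : ℝ)) : ℂ)) Filter.atTop (𝓝 0) := by
          have := tendsto_one_div_add_atTop_nhds_zero_nat (𝕜 := ℝ)
          have h2 := (Complex.continuous_ofReal.tendsto (0:ℝ)).comp this
          simpa [Function.comp_def] using h2
        have h2 : Filter.Tendsto (fun n : ℕ => Complex.exp (-(((1 / (n + 1) : ℝ)) : ℂ) * z ^ 2))
            Filter.atTop (𝓝 1) := by
          have h3 := ((h1.neg).mul_const (z ^ 2))
          rw [neg_zero, zero_mul] at h3
          have h4 := (Complex.continuous_exp.tendsto 0).comp h3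
          simpa [Function.comp_def] using h4
        have h5 := ((tendsto_const_nhds (x := f z)).sub (h2.mul_const (f z))).norm.pow 2
        simpa using h5
    rw [MeasureTheory.integral_zero] at key
    obtain ⟨n, hn⟩ := (key.eventually_lt_const hδ).exists
    exact ⟨fun z => Complex.exp (-(((1 / (n + 1) : ℝ)) : ℂ) * z ^ 2) * f z,
      ⟨1 / (n + 1), by positivity, f, hf, rfl⟩, hn⟩
  · exact ⟨cell_subset_cellU ϖ hϖ.1, cellU_subset_piDom ϖ, closure_inter_subset_cellU hϖ⟩
  · rintro f ⟨ε, hε, g, hg, rfl⟩ η hη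
    set F : ℂ → ℂ := fun z => Complex.exp (-(ε : ℂ) * z ^ 2) * g z with hF
    have hFA2 : F ∈ A2 (PiDom ϖ) := gauss_mul_mem hϖ hε.le hg
    have hgInt : MeasureTheory.IntegrableOn (fun z => ‖g z‖ ^ 2) (PiDom ϖ) :=
      integrableOn_norm_sq hg.2
    have hUopen : IsOpen (cellU ϖ) := isOpen_interior
    have main : ∀ K : Set ℂ, K ⊆ cellU ϖ → IsCompact K →
        TendstoUniformlyOn (fun N z => floquetSum F η N z)
          (fun z => floquet F z η) atTop K := by
      intro K hK hKc
      obtain ⟨r, hr, hrsub⟩ := hKc.exists_cthickening_subset_open (piDom_open ϖ)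
        (hK.trans (cellU_subset_piDom ϖ))
      set B : ℝ := Real.sqrt (∫ z in PiDom ϖ, ‖g z‖ ^ 2) * Real.sqrt (Real.pi * r ^ 2)
        / (Real.pi * r ^ 2) with hB
      have hballs : ∀ z ∈ K, ∀ m : ℤ, closedBall (z + (m : ℂ)) r ⊆ PiDom ϖ := by
        intro z hz m w hw
        have h1 : w - (m : ℂ) ∈ closedBall z r := by
          simp only [mem_closedBall, Complex.dist_eq] at hw ⊢
          convert hw using 2
          ring
        have h2 : w - (m : ℂ) ∈ PiDom ϖ := hrsub (closedBall_subset_cthickening hz r h1)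
        simpa using piDom_add_int m h2
      have hmem : ∀ z ∈ K, ∀ m : ℤ, z + (m : ℂ) ∈ PiDom ϖ := fun z hz m =>
        hballs z hz m (mem_closedBall_self hr.le)
      have hgb : ∀ z ∈ K, ∀ m : ℤ, ‖g (z + (m : ℂ))‖ ≤ B := fun z hz m =>
        pointwise_bound (piDom_open ϖ) hg.1 hgInt hr (hballs z hz m)
      obtain ⟨R₀, hR₀⟩ := hKc.isBounded.subset_closedBall 0
      set R : ℝ := max R₀ 0 with hRdef
      have hR : 0 ≤ R := le_max_right _ _
      have hKRe : ∀ z ∈ K, |z.re| ≤ R := by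
        intro z hz
        refine (Complex.abs_re_le_norm z).trans (le_trans ?_ (le_max_left _ _))
        have := hR₀ hz
        simpa [Complex.dist_eq] using this
      set c0 : ℝ := (Real.sqrt (2 * Real.pi))⁻¹ with hc0
      have hc0n : 0 ≤ c0 := inv_nonneg.2 (Real.sqrt_nonneg _)
      have hBn : 0 ≤ B := by rw [hB]; positivity
      set u : ℤ → ℝ := fun m =>
        c0 * (Real.exp (ε * M ^ 2) * B) * Real.exp (-(ε * max (|(m : ℝ)| - R) 0 ^ 2)) with hu_def
      have hu : Summable u := (summable_aux hε hR).mul_left _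
      set T : ℤ → ℂ → ℂ := fun m z =>
        ((Real.sqrt (2 * Real.pi) : ℝ) : ℂ)⁻¹
          * (Complex.exp (-(Complex.I * (η : ℂ) * (m : ℂ))) * F (z + (m : ℂ))) with hT
      have hTb : ∀ (m : ℤ), ∀ z ∈ K, ‖T m z‖ ≤ u m := by
        intro m z hz
        rw [hT]
        simp only []
        rw [norm_mul, norm_mul, norm_inv]
        have h1 : ‖((Real.sqrt (2 * Real.pi) : ℝ) : ℂ)‖ = Real.sqrt (2 * Real.pi) := by
          rw [Complex.norm_real, Real.norm_eq_abs, _root_.abs_of_nonneg (Real.sqrt_nonneg _)]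
        have h2 : ‖Complex.exp (-(Complex.I * (η : ℂ) * (m : ℂ)))‖ = 1 := by
          rw [Complex.norm_exp]
          simp
        rw [h1, h2, one_mul]
        have h3 : ‖F (z + (m : ℂ))‖
            = ‖Complex.exp (-(ε : ℂ) * (z + (m : ℂ)) ^ 2)‖ * ‖g (z + (m : ℂ))‖ := by
          rw [hF]; exact norm_mul _ _
        have him : |(z + (m : ℂ)).im| ≤ M := im_le hϖ (hmem z hz m)
        have hre : max (|(m : ℝ)| - R) 0 ≤ |(z + (m : ℂ)).re| := by
          rcases max_cases (|(m : ℝ)| - R) 0 with ⟨he, hc⟩ | ⟨he, hc⟩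
          · rw [he]
            have : |(m : ℝ)| - |z.re| ≤ |(z + (m : ℂ)).re| := by
              have habs : |(m : ℝ)| ≤ |(z + (m : ℂ)).re| + |z.re| := by
                have : (m : ℝ) = (z + (m : ℂ)).re - z.re := by
                  simp [Complex.add_re]
                rw [this]
                exact abs_sub _ _
              linarith
            linarith [hKRe z hz]
          · rw [he]; positivity
        have hexp : ‖Complex.exp (-(ε : ℂ) * (z + (m : ℂ)) ^ 2)‖
            ≤ Real.exp (ε * M ^ 2) * Real.exp (-(ε * max (|(m : ℝ)| - R) 0 ^ 2)) := by
          rw [norm_gauss_eq, ← Real.exp_add]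
          apply Real.exp_le_exp.2
          have him2 : (z + (m : ℂ)).im ^ 2 ≤ M ^ 2 :=
            sq_le_sq' (by linarith [abs_le.1 him]) (abs_le.1 him).2
          have hre2 : max (|(m : ℝ)| - R) 0 ^ 2 ≤ (z + (m : ℂ)).re ^ 2 := by
            rw [← _root_.sq_abs ((z + (m : ℂ)).re)]
            exact pow_le_pow_left₀ (le_max_right _ _) hre 2
          nlinarith [hε.le]
        rw [hu_def]
        simp only []
        rw [h3]
        calc c0 * (‖Complex.exp (-(ε : ℂ) * (z + (m : ℂ)) ^ 2)‖ * ‖g (z + (m : ℂ))‖)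
            ≤ c0 * ((Real.exp (ε * M ^ 2) * Real.exp (-(ε * max (|(m : ℝ)| - R) 0 ^ 2))) * B) := by
              apply mul_le_mul_of_nonneg_left _ hc0n
              exact mul_le_mul hexp (hgb z hz m) (norm_nonneg _) (by positivity)
          _ = c0 * (Real.exp (ε * M ^ 2) * B) * Real.exp (-(ε * max (|(m : ℝ)| - R) 0 ^ 2)) := by
              ring
      have huc := tendstoUniformlyOn_tsum hu hTb
      have hmono : Filter.Tendsto (fun N : ℕ => Finset.Icc (-(N : ℤ)) (N : ℤ))
          Filter.atTop Filter.atTop := by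
        apply Filter.tendsto_atTop_finset_of_monotone
        · intro p q hpq
          apply Finset.Icc_subset_Icc
          · exact neg_le_neg (by exact_mod_cast hpq)
          · exact_mod_cast hpq
        · intro m
          refine ⟨m.natAbs, ?_⟩
          simp only [Finset.mem_Icc]
          omega
      have e1 : (fun (N : ℕ) (z : ℂ) => floquetSum F η N z)
          = fun (N : ℕ) (z : ℂ) => ∑ m ∈ Finset.Icc (-(N : ℤ)) (N : ℤ), T m z := by
        funext N z
        rw [floquetSum, Finset.mul_sum]
      have e2 : (fun z => floquet F z η) = fun z => ∑' m : ℤ, T m z := by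
        funext z
        rw [floquet, ← tsum_mul_left]
      rw [e1, e2]
      exact fun u' hu' => hmono.eventually (huc u' hu')
    refine ⟨main, ?_⟩
    have hdiff : ∀ N : ℕ, DifferentiableOn ℂ (fun z => floquetSum F η N z) (cellU ϖ) := by
      intro N
      have hterm : ∀ m : ℤ, DifferentiableOn ℂ
          (fun z => Complex.exp (-(Complex.I * (η : ℂ) * (m : ℂ))) * F (z + (m : ℂ)))
          (cellU ϖ) := by
        intro m
        have hcomp : DifferentiableOn ℂ (fun z => F (z + (m : ℂ))) (cellU ϖ) := by
          apply DifferentiableOn.comp hFA2.1 ((differentiable_id.add_const _).differentiableOn)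
          intro z hz
          exact piDom_add_int m (cellU_subset_piDom ϖ hz)
        exact (differentiableOn_const _).mul hcomp
      have : DifferentiableOn ℂ
          (fun z => ∑ m ∈ Finset.Icc (-(N : ℤ)) (N : ℤ),
            Complex.exp (-(Complex.I * (η : ℂ) * (m : ℂ))) * F (z + (m : ℂ))) (cellU ϖ) := by
        apply DifferentiableOn.fun_sum
        intro m _
        exact hterm m
      exact (differentiableOn_const _).mul this
    have hlu : TendstoLocallyUniformlyOn (fun N z => floquetSum F η N z)
        (fun z => floquet F z η) Filter.atTop (cellU ϖ) :=
      (tendstoLocallyUniformlyOn_iff_forall_isCompact hUopen).2 main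
    exact hlu.differentiableOn (Filter.Eventually.of_forall hdiff) hUopen

end
end

section
/- Let Π = ℝ × (1/4, 1/2) ⊂ ℂ. Then the function f(z) = 1/z is analytic on Π and square-integrable over Π (so f ∈ A²(Π)), yet for every z ∈ (0,1)×(1/4,1/2) the family (1/(z+m))_{m∈ℤ} is not summable; that is, the Floquet series Σ_{m∈ℤ} e^{−iηm} f(z+m) at η = 0 does not converge unconditionally. -/
open Complex MeasureTheory Set Filter Topology

noncomputable section

/-- The strip `Π = ℝ × (1/4, 1/2)`. -/
def PiStrip : Set ℂ := {z : ℂ | 1/4 < z.im ∧ z.im < 1/2}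

lemma aux_integrable_bound :
    IntegrableOn (fun z : ℂ => 16 * ((z.re)^2 + 1)⁻¹) PiStrip := by
  have e := Complex.measurableEquivRealProd
  have hmp : MeasurePreserving (⇑Complex.measurableEquivRealProd.symm) volume volume :=
    Complex.volume_preserving_equiv_real_prod.symm Complex.measurableEquivRealProd
  rw [← hmp.integrableOn_comp_preimage
    (Complex.measurableEquivRealProd.symm.measurableEmbedding)]
  have hpre : (⇑Complex.measurableEquivRealProd.symm) ⁻¹' PiStrip
      = (univ : Set ℝ) ×ˢ Ioo (1/4 : ℝ) (1/2) := by
    ext p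
    simp [PiStrip, Complex.measurableEquivRealProd, Complex.equivRealProd,
      Set.mem_prod, Set.mem_Ioo, and_comm]
  rw [hpre]
  have h1 : Integrable (fun x : ℝ => 16 * (x^2 + 1)⁻¹) := by
    have := integrable_inv_one_add_sq.const_mul (16 : ℝ)
    simpa [add_comm] using this
  have h2 : IntegrableOn (fun _ : ℝ => (1 : ℝ)) (Ioo (1/4 : ℝ) (1/2)) := by
    exact integrableOn_const measure_Ioo_lt_top.ne
  have key : Integrable (fun p : ℝ × ℝ => (16 * ((p.1)^2 + 1)⁻¹) * 1)
      ((volume.restrict (univ : Set ℝ)).prod (volume.restrict (Ioo (1/4 : ℝ) (1/2)))) :=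
    Integrable.mul_prod (h1.restrict) h2
  rw [Measure.prod_restrict, ← Measure.volume_eq_prod] at key
  simpa [Function.comp_def, IntegrableOn, Complex.measurableEquivRealProd_symm_apply] using key

lemma aux_memL2 : MemLp (fun z : ℂ => z⁻¹) 2 (volume.restrict PiStrip) := by
  have hmeas : AEStronglyMeasurable (fun z : ℂ => z⁻¹) (volume.restrict PiStrip) :=
    measurable_inv.aestronglyMeasurable
  rw [memLp_two_iff_integrable_sq_norm hmeas]
  have hPimeas : MeasurableSet PiStrip := by
    have : PiStrip = Complex.im ⁻¹' (Ioo (1/4 : ℝ) (1/2)) := by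
      ext z; simp [PiStrip]
    rw [this]; exact Complex.measurable_im measurableSet_Ioo
  refine (aux_integrable_bound).mono' ?_ ?_
  · exact (measurable_inv.norm.pow measurable_const).aestronglyMeasurable
  · rw [ae_restrict_iff' hPimeas]
    filter_upwards with z hz
    rcases hz with ⟨h1, h2⟩
    have hzne : z ≠ 0 := by
      intro h; rw [h] at h1; norm_num at h1
    have habs : ‖(z⁻¹ : ℂ)‖^2 = ((z.re)^2 + (z.im)^2)⁻¹ := by
      rw [norm_inv, inv_pow,
        show ‖z‖^2 = Complex.normSq z from Complex.sq_norm z, Complex.normSq_apply]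
      ring_nf
    have hnn : (0:ℝ) ≤ ‖(z⁻¹ : ℂ)‖^2 := by positivity
    rw [Real.norm_eq_abs, _root_.abs_of_nonneg hnn, habs]
    rw [show (16:ℝ) * ((z.re)^2 + 1)⁻¹ = (((z.re)^2 + 1)/16)⁻¹ by
      field_simp]
    apply inv_anti₀ (by positivity)
    nlinarith [sq_nonneg z.re]

/-- On `Π = ℝ × (1/4,1/2)`, the function `f(z) = 1/z` belongs to
`A²(Π)`, yet for every `z ∈ (0,1)×(1/4,1/2)` the family `(1/(z+m))_{m∈ℤ}` is not
summable, i.e. the Floquet series at `η = 0` does not converge unconditionally. -/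
theorem statement5 :
    (fun z : ℂ => z⁻¹) ∈ A2 PiStrip ∧
    ∀ z : ℂ, 0 < z.re → z.re < 1 → 1/4 < z.im → z.im < 1/2 →
      ¬ Summable (fun m : ℤ => (z + (m : ℂ))⁻¹) := by
  constructor
  · constructor
    · intro z hz
      have hzne : z ≠ 0 := by
        intro h
        rw [h] at hz
        norm_num [PiStrip] at hz
      exact (differentiableAt_inv hzne).differentiableWithinAt
    · exact aux_memL2
  · intro z hre0 hre1 him0 him1 hsum
    have hnorm : Summable (fun m : ℤ => ‖(z + (m : ℂ))⁻¹‖) :=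
      (summable_norm_iff).mpr hsum
    have hnat : Summable (fun n : ℕ => ‖(z + ((n : ℤ) : ℂ))⁻¹‖) :=
      hnorm.comp_injective (fun a b h => by exact_mod_cast h)
    have hcomp : Summable (fun n : ℕ => (((n : ℝ)) + 2)⁻¹) := by
      refine Summable.of_nonneg_of_le (fun n => by positivity) (fun n => ?_) hnat
      have hle : ‖z + ((n : ℤ) : ℂ)‖ ≤ (n : ℝ) + 2 := by
        calc ‖z + ((n : ℤ) : ℂ)‖ ≤ ‖z‖ + ‖((n : ℤ) : ℂ)‖ := norm_add_le _ _
        _ ≤ 2 + (n : ℝ) := by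
            push_cast
            gcongr
            · have h1 : |z.re| ≤ 1 := by rw [abs_le]; constructor <;> linarith
              have h2 : |z.im| ≤ 1 := by rw [abs_le]; constructor <;> linarith
              calc ‖z‖ ≤ |z.re| + |z.im| := Complex.norm_le_abs_re_add_abs_im z
              _ ≤ 2 := by linarith
            · simp
        _ = (n : ℝ) + 2 := by ring
      rw [norm_inv]
      have hpos : (0:ℝ) < ‖z + ((n : ℤ) : ℂ)‖ := by
        rw [norm_pos_iff]
        intro h
        have := congrArg Complex.im h
        simp at this
        linarith
      exact inv_anti₀ hpos hle
    have : Summable (fun n : ℕ => ((n : ℝ))⁻¹) := by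
      rw [← summable_nat_add_iff 2]
      exact hcomp.congr (fun n => by push_cast; ring_nf)
    exact Real.not_summable_natCast_inv this


end
end

section
/- The subspace ℋ_η = { g ∈ L²((−π,π)×ϖ) : g(·,η) ∈ A²_{η,ext}(ϖ) for a.e. η ∈ [−π,π] } is dense in L²(−π,π; A²_η(ϖ)) = { g ∈ L²((−π,π)×ϖ) : g(·,η) ∈ A²_η(ϖ) for a.e. η ∈ [−π,π] }. -/
open Complex MeasureTheory Set Filter Topology

noncomputable section

/-- The subspace `ℋ_η ⊆ L²((−π,π)×ϖ)` of functions with `g(·,η) ∈ A²_{η,ext}(ϖ)`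
for a.e. `η`. -/
def HEta (ϖ Pid : Set ℂ) (a b : ℝ) : Set (ℝ × ℂ → ℂ) :=
  {g | MemLp g 2 (volume.restrict ((Ioo (-Real.pi) Real.pi) ×ˢ ϖ)) ∧
    ∀ᵐ η ∂(volume.restrict (Icc (-Real.pi) Real.pi)),
      (fun z => g (η, z)) ∈ A2ext ϖ Pid a b η}

/-- The subspace `L²(−π,π; A²_η(ϖ)) ⊆ L²((−π,π)×ϖ)` of functions with
`g(·,η) ∈ A²_η(ϖ)` for a.e. `η`. -/
def L2AEta (ϖ Pid : Set ℂ) (a b : ℝ) : Set (ℝ × ℂ → ℂ) :=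
  {g | MemLp g 2 (volume.restrict ((Ioo (-Real.pi) Real.pi) ×ˢ ϖ)) ∧
    ∀ᵐ η ∂(volume.restrict (Icc (-Real.pi) Real.pi)),
      (fun z => g (η, z)) ∈ A2eta ϖ Pid a b η}

open scoped ENNReal

instance factTwoNeTop : Fact ((2:ℝ≥0∞) ≠ ∞) := ⟨by norm_num⟩

lemma memLp2_iff {α : Type*} [MeasurableSpace α] (m : Measure α) (u : α → ℂ) :
    MemLp u 2 m ↔ AEStronglyMeasurable u m ∧
      (∫⁻ x, ((‖u x‖₊ : ℝ≥0∞)) ^ (2:ℝ) ∂m) < ∞ := by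
  constructor
  · rintro ⟨h1, h2⟩
    refine ⟨h1, ?_⟩
    rw [eLpNorm_eq_lintegral_rpow_enorm_toReal two_ne_zero (by norm_num)] at h2
    simp only [ENNReal.toReal_ofNat] at h2
    exact (ENNReal.rpow_lt_top_iff_of_pos (by norm_num : (0:ℝ) < 1/2)).1 h2
  · rintro ⟨h1, h2⟩
    refine ⟨h1, ?_⟩
    rw [eLpNorm_eq_lintegral_rpow_enorm_toReal two_ne_zero (by norm_num)]
    simp only [ENNReal.toReal_ofNat]
    exact ENNReal.rpow_lt_top_of_nonneg (by norm_num) h2.ne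

lemma integrable_sq_of_memLp2 {α : Type*} [MeasurableSpace α] {m : Measure α} {u : α → ℂ}
    (hu : MemLp u 2 m) : Integrable (fun x => ‖u x‖^2) m := by
  have := hu.integrable_norm_rpow two_ne_zero (by norm_num)
  simp only [ENNReal.toReal_ofNat] at this
  refine this.congr (Eventually.of_forall fun x => ?_)
  rw [show (2:ℝ) = ((2:ℕ):ℝ) by norm_num]
  simp [Real.rpow_natCast]

lemma norm_toLp_sq {α : Type*} [MeasurableSpace α] {m : Measure α} {u : α → ℂ}
    (hu : MemLp u 2 m) : ‖hu.toLp u‖^2 = ∫ x, ‖u x‖^2 ∂m := by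
  have h1 := inner_self_eq_norm_sq (𝕜 := ℂ) (hu.toLp u)
  rw [← h1, MeasureTheory.L2.inner_def]
  have h2 : (fun a => (inner ℂ ((hu.toLp u : _ →₂[m] ℂ) a) ((hu.toLp u : _ →₂[m] ℂ) a) : ℂ))
      =ᵐ[m] fun a => ((‖u a‖^2 : ℝ) : ℂ) := by
    filter_upwards [hu.coeFn_toLp] with a ha
    rw [RCLike.inner_apply', ha, Complex.conj_mul']
    norm_cast
  have h3 : (∫ a, ((‖u a‖^2 : ℝ) : ℂ) ∂m) = ((∫ a, ‖u a‖^2 ∂m : ℝ) : ℂ) := integral_ofReal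
  rw [integral_congr_ae h2, h3]
  simp

lemma norm_toLp_sub_sq {α : Type*} [MeasurableSpace α] {m : Measure α} {u v : α → ℂ}
    (hu : MemLp u 2 m) (hv : MemLp v 2 m) :
    ‖hu.toLp u - hv.toLp v‖^2 = ∫ x, ‖u x - v x‖^2 ∂m := by
  rw [← MemLp.toLp_sub hu hv]
  exact norm_toLp_sq (hu.sub hv)


section C2x
open scoped ENNReal
section C2
variable {ν : Measure ℝ} {μ : Measure ℂ} [SFinite ν] [SFinite μ]

lemma memLp2_iff' {α : Type*} [MeasurableSpace α] (m : Measure α) (u : α → ℂ) :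
    MemLp u 2 m ↔ AEStronglyMeasurable u m ∧
      (∫⁻ x, ((‖u x‖₊ : ℝ≥0∞)) ^ (2:ℝ) ∂m) < ∞ := by
  constructor
  · rintro ⟨h1, h2⟩
    refine ⟨h1, ?_⟩
    rw [eLpNorm_eq_lintegral_rpow_enorm_toReal two_ne_zero (by norm_num)] at h2
    simp only [ENNReal.toReal_ofNat] at h2
    exact (ENNReal.rpow_lt_top_iff_of_pos (by norm_num : (0:ℝ) < 1/2)).1 h2
  · rintro ⟨h1, h2⟩
    refine ⟨h1, ?_⟩
    rw [eLpNorm_eq_lintegral_rpow_enorm_toReal two_ne_zero (by norm_num)]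
    simp only [ENNReal.toReal_ofNat]
    exact ENNReal.rpow_lt_top_of_nonneg (by norm_num) h2.ne

lemma memLp_slice {f : ℝ × ℂ → ℂ} (hf : MemLp f 2 (ν.prod μ)) :
    ∀ᵐ η ∂ν, MemLp (fun z => f (η, z)) 2 μ := by
  obtain ⟨hm, hint⟩ := (memLp2_iff' _ _).1 hf
  have hae : AEMeasurable (fun p : ℝ × ℂ => ((‖f p‖₊ : ℝ≥0∞)) ^ (2:ℝ)) (ν.prod μ) :=
    hm.enorm.pow_const (2:ℝ)
  obtain ⟨f', hf'm, hff'⟩ := hae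
  rw [lintegral_prod _ ⟨f', hf'm, hff'⟩] at hint
  have hslice := Measure.ae_ae_of_ae_prod hff'
  have houter : (fun η => ∫⁻ z, ((‖f (η, z)‖₊ : ℝ≥0∞)) ^ (2:ℝ) ∂μ)
      =ᵐ[ν] (fun η => ∫⁻ z, f' (η, z) ∂μ) := by
    filter_upwards [hslice] with η h
    exact lintegral_congr_ae h
  rw [lintegral_congr_ae houter] at hint
  have h1 := ae_lt_top hf'm.lintegral_prod_right' hint.ne
  filter_upwards [h1, hm.prodMk_left, houter] with η h2 h3 h4
  refine (memLp2_iff' _ _).2 ⟨h3, ?_⟩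
  have h5 : (∫⁻ z, ((‖f (η, z)‖₊ : ℝ≥0∞)) ^ (2:ℝ) ∂μ) < ⊤ := by rw [h4]; exact h2
  exact h5

lemma memLp_mul_of_bound {α : Type*} [MeasurableSpace α] {m : Measure α} {u : α → ℂ}
    (hu : MemLp u 2 m) {c : α → ℂ} (hc : AEStronglyMeasurable c m) {C : ℝ}
    (hC : ∀ᵐ x ∂m, ‖c x‖ ≤ C) : MemLp (fun x => c x * u x) 2 m := by
  refine MemLp.of_le_mul (c := C) hu (hc.mul hu.aestronglyMeasurable) ?_
  filter_upwards [hC] with x hx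
  rw [norm_mul]
  exact mul_le_mul_of_nonneg_right hx (norm_nonneg _)

omit [SFinite ν] in
lemma memLp_snd [IsFiniteMeasure ν] {s : ℂ → ℂ} (hs : MemLp s 2 μ) :
    MemLp (fun p : ℝ × ℂ => s p.2) 2 (ν.prod μ) := by
  obtain ⟨hm, hint⟩ := (memLp2_iff' _ _).1 hs
  refine (memLp2_iff' _ _).2 ⟨hm.comp_snd, ?_⟩
  have hae : AEMeasurable (fun p : ℝ × ℂ => ((‖s p.2‖₊ : ℝ≥0∞)) ^ (2:ℝ)) (ν.prod μ) :=
    ((hm.comp_snd (μ := ν)).enorm).pow_const (2:ℝ)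
  rw [lintegral_prod _ hae]
  calc (∫⁻ η, (∫⁻ z, ((‖s z‖₊ : ℝ≥0∞)) ^ (2:ℝ) ∂μ) ∂ν)
      = (∫⁻ z, ((‖s z‖₊ : ℝ≥0∞)) ^ (2:ℝ) ∂μ) * ν univ := lintegral_const _
    _ < ∞ := ENNReal.mul_lt_top hint (measure_lt_top ν univ)

omit [SFinite ν] in
lemma memLp_genFun [IsFiniteMeasure ν] {s : ℂ → ℂ} (hs : MemLp s 2 μ) {E : Set ℝ}
    (hE : MeasurableSet E) :
    MemLp (fun p : ℝ × ℂ => E.indicator (fun _ => (1:ℂ)) p.1 * s p.2) 2 (ν.prod μ) := by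
  refine memLp_mul_of_bound (memLp_snd hs) ?_ (C := 1) ?_
  · exact (((measurable_const (a := (1:ℂ))).indicator hE).comp measurable_fst).aestronglyMeasurable
  · refine Eventually.of_forall fun p => ?_
    by_cases h : p.1 ∈ E <;> simp [Set.indicator_apply, h]
end C2
end C2x

section C3
variable {ϖ : Set ℂ} {M a b : ℝ}

lemma A2ext_add {Pid : Set ℂ} {η : ℝ} {f g : ℂ → ℂ}
    (hf : f ∈ A2ext ϖ Pid a b η) (hg : g ∈ A2ext ϖ Pid a b η) :
    (fun z => f z + g z) ∈ A2ext ϖ Pid a b η := by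
  obtain ⟨⟨hfd, hfl⟩, U₁, F₁, hU₁o, hU₁p, hU₁c, hF₁d, hF₁e, hF₁b⟩ := hf
  obtain ⟨⟨hgd, hgl⟩, U₂, F₂, hU₂o, hU₂p, hU₂c, hF₂d, hF₂e, hF₂b⟩ := hg
  refine ⟨⟨hfd.add hgd, hfl.add hgl⟩, U₁ ∩ U₂, fun z => F₁ z + F₂ z,
    hU₁o.inter hU₂o, inter_subset_left.trans hU₁p, subset_inter hU₁c hU₂c,
    (hF₁d.mono inter_subset_left).add (hF₂d.mono inter_subset_right), ?_, ?_⟩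
  · intro z hz
    simp only [hF₁e hz, hF₂e hz]
  · intro y hy1 hy2
    simp only [hF₁b y hy1 hy2, hF₂b y hy1 hy2, mul_add]

lemma A2ext_smul {Pid : Set ℂ} {η : ℝ} {f : ℂ → ℂ} (c : ℂ)
    (hf : f ∈ A2ext ϖ Pid a b η) :
    (fun z => c * f z) ∈ A2ext ϖ Pid a b η := by
  obtain ⟨⟨hfd, hfl⟩, U₁, F₁, hU₁o, hU₁p, hU₁c, hF₁d, hF₁e, hF₁b⟩ := hf
  refine ⟨⟨hfd.const_smul c, hfl.const_mul c⟩,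
    U₁, fun z => c * F₁ z, hU₁o, hU₁p, hU₁c, hF₁d.const_smul c, ?_, ?_⟩
  · intro z hz
    simp only [hF₁e hz]
  · intro y hy1 hy2
    show c * F₁ (1 + y * Complex.I) = Complex.exp ((η:ℂ) * Complex.I) * (c * F₁ (y * Complex.I))
    rw [hF₁b y hy1 hy2]
    ring

lemma A2ext_zero {η : ℝ} : (fun _ : ℂ => (0:ℂ)) ∈ A2ext ϖ (PiDom ϖ) a b η := by
  refine ⟨⟨differentiableOn_const 0, by simpa using (zero_memLp (p := 2)
      (μ := volume.restrict ϖ))⟩, PiDom ϖ, fun _ => 0, isOpen_interior,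
    subset_rfl, inter_subset_right, differentiableOn_const 0, fun z _ => rfl, ?_⟩
  intro y _ _
  simp

lemma A2ext_twist (hϖ : cellOK ϖ M a b) {η : ℝ} (θ : ℝ) {f : ℂ → ℂ}
    (hf : f ∈ A2ext ϖ (PiDom ϖ) a b η) :
    (fun z => Complex.exp ((θ:ℂ) * Complex.I * z) * f z) ∈ A2ext ϖ (PiDom ϖ) a b (η + θ) := by
  obtain ⟨⟨hfd, hfl⟩, U₁, F₁, hU₁o, hU₁p, hU₁c, hF₁d, hF₁e, hF₁b⟩ := hf
  have hdiff : Differentiable ℂ fun z => Complex.exp ((θ:ℂ) * Complex.I * z) :=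
    (differentiable_const _).mul differentiable_id |>.cexp
  refine ⟨⟨(hdiff.differentiableOn).mul hfd, ?_⟩, U₁,
    fun z => Complex.exp ((θ:ℂ) * Complex.I * z) * F₁ z, hU₁o, hU₁p, hU₁c,
    (hdiff.differentiableOn).mul hF₁d, ?_, ?_⟩
  · -- MemLp
    refine memLp_mul_of_bound hfl hdiff.continuous.aestronglyMeasurable
      (C := Real.exp (|θ| * M)) ?_
    have hmem : ∀ᵐ z ∂(volume.restrict ϖ), z ∈ ϖ :=
      ae_restrict_mem hϖ.1.measurableSet
    filter_upwards [hmem] with z hz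
    have him := hϖ.2.2.1 hz
    simp only [mem_setOf_eq] at him
    rw [Complex.norm_exp]
    have hre : ((θ:ℂ) * Complex.I * z).re = -θ * z.im := by
      simp [Complex.mul_re, Complex.mul_im]
    rw [hre]
    apply Real.exp_le_exp.2
    have h1 : |z.im| ≤ M := by
      rw [abs_le]; constructor <;> nlinarith [him.2.2.1, him.2.2.2]
    calc -θ * z.im ≤ |(-θ) * z.im| := le_abs_self _
      _ = |θ| * |z.im| := by rw [abs_mul, abs_neg]
      _ ≤ |θ| * M := by apply mul_le_mul_of_nonneg_left h1 (abs_nonneg θ)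
  · intro z hz
    simp only [hF₁e hz]
  · intro y hy1 hy2
    have hb := hF₁b y hy1 hy2
    have e1 : (θ:ℂ) * Complex.I * (1 + y * Complex.I)
        = (θ:ℂ) * Complex.I + (θ:ℂ) * Complex.I * (y * Complex.I) := by ring
    have e2 : (((η + θ : ℝ)):ℂ) * Complex.I = (η:ℂ) * Complex.I + (θ:ℂ) * Complex.I := by
      push_cast; ring
    show Complex.exp ((θ:ℂ) * Complex.I * (1 + y * Complex.I)) * F₁ (1 + y * Complex.I)
        = Complex.exp ((((η + θ : ℝ)):ℂ) * Complex.I)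
          * (Complex.exp ((θ:ℂ) * Complex.I * (y * Complex.I)) * F₁ (y * Complex.I))
    rw [e1, Complex.exp_add, hb, e2, Complex.exp_add]
    ring

end C3

section Main

set_option maxHeartbeats 1000000 in
/-- `ℋ_η` is a dense subspace of `L²(−π,π; A²_η(ϖ))`. -/
theorem statement6 (M a b : ℝ) (hM : 0 < M) (hab : a < b)
    (ϖ : Set ℂ) (hϖ : cellOK ϖ M a b) :
    HEta ϖ (PiDom ϖ) a b ⊆ L2AEta ϖ (PiDom ϖ) a b ∧
    ∀ g ∈ L2AEta ϖ (PiDom ϖ) a b, ∀ ε > (0:ℝ), ∃ h ∈ HEta ϖ (PiDom ϖ) a b,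
      (∫ p in (Ioo (-Real.pi) Real.pi) ×ˢ ϖ, ‖g p - h p‖ ^ 2) < ε := by
  have hϖm : MeasurableSet ϖ := hϖ.1.measurableSet
  constructor
  · rintro g ⟨hg1, hg2⟩
    refine ⟨hg1, ?_⟩
    filter_upwards [hg2] with η hη
    refine ⟨hη.1, fun ε' hε' => ⟨_, hη, ?_⟩⟩
    simpa using hε'
  · rintro g ⟨hg1, hg2⟩ ε hε
    classical
    haveI hfinν : IsFiniteMeasure (volume.restrict (Ioo (-Real.pi) Real.pi)) := by
      constructor
      rw [Measure.restrict_apply_univ, Real.volume_Ioo]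
      exact ENNReal.ofReal_lt_top
    haveI hfinμ : IsFiniteMeasure (volume.restrict ϖ) := by
      constructor
      rw [Measure.restrict_apply_univ]
      have hb : Bornology.IsBounded ϖ := by
        apply Bornology.IsBounded.subset (Metric.isBounded_closedBall (x := (0:ℂ)) (r := 1 + M))
        intro z hz
        have h1 := hϖ.2.2.1 hz
        simp only [mem_setOf_eq] at h1
        rw [Metric.mem_closedBall, dist_zero_right]
        calc ‖z‖ ≤ |z.re| + |z.im| := Complex.norm_le_abs_re_add_abs_im z
          _ ≤ 1 + M := by
              have h3 : |z.re| ≤ 1 := by rw [abs_le]; constructor <;> nlinarith [h1.1, h1.2.1]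
              have h2 : |z.im| ≤ M := by
                rw [abs_le]; constructor <;> nlinarith [h1.2.2.1, h1.2.2.2]
              linarith
      exact hb.measure_lt_top
    have measeq : volume.restrict ((Ioo (-Real.pi) Real.pi) ×ˢ ϖ)
        = (volume.restrict (Ioo (-Real.pi) Real.pi)).prod (volume.restrict ϖ) :=
      (Measure.prod_restrict _ _).symm
    have hbd : ∀ θ : ℝ, |θ| ≤ Real.pi → ∀ z ∈ ϖ,
        ‖Complex.exp ((θ:ℂ) * Complex.I * z)‖ ≤ Real.exp (Real.pi * M) := by
      intro θ hθ z hz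
      have h1 := hϖ.2.2.1 hz
      simp only [mem_setOf_eq] at h1
      rw [Complex.norm_exp]
      apply Real.exp_le_exp.2
      have hre : ((θ:ℂ) * Complex.I * z).re = -θ * z.im := by
        simp [Complex.mul_re, Complex.mul_im]
      rw [hre]
      have h2 : |z.im| ≤ M := by
        rw [abs_le]; constructor <;> nlinarith [h1.2.2.1, h1.2.2.2]
      calc -θ * z.im ≤ |(-θ) * z.im| := le_abs_self _
        _ = |θ| * |z.im| := by rw [abs_mul, abs_neg]
        _ ≤ Real.pi * M := mul_le_mul hθ h2 (abs_nonneg _) Real.pi_pos.le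
    have hCpos : 0 < Real.exp (Real.pi * M) := Real.exp_pos _
    have hC2pos : 0 < Real.exp (Real.pi * M) ^ 2 := by positivity
    set G : ℝ × ℂ → ℂ := fun p => Complex.exp (-(p.1:ℂ) * Complex.I * p.2) * g p with hGdef
    have hconte : Continuous fun p : ℝ × ℂ => Complex.exp (-(p.1:ℂ) * Complex.I * p.2) := by
      apply Complex.continuous_exp.comp
      exact ((Complex.continuous_ofReal.comp continuous_fst).neg.mul continuous_const).mul
        continuous_snd
    have memPm : ∀ᵐ p ∂((volume.restrict (Ioo (-Real.pi) Real.pi)).prod (volume.restrict ϖ)),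
        p ∈ (Ioo (-Real.pi) Real.pi) ×ˢ ϖ := by
      rw [← measeq]
      exact ae_restrict_mem (measurableSet_Ioo.prod hϖm)
    have hgL : MemLp g 2
        ((volume.restrict (Ioo (-Real.pi) Real.pi)).prod (volume.restrict ϖ)) := by
      rw [← measeq]; exact hg1
    have hGL : MemLp G 2
        ((volume.restrict (Ioo (-Real.pi) Real.pi)).prod (volume.restrict ϖ)) := by
      refine memLp_mul_of_bound hgL hconte.aestronglyMeasurable
        (C := Real.exp (Real.pi * M)) ?_
      filter_upwards [memPm] with p hp
      have he : -(p.1:ℂ) * Complex.I * p.2 = ((-p.1 : ℝ):ℂ) * Complex.I * p.2 := by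
        push_cast; ring
      rw [he]
      apply hbd
      · rw [abs_neg]
        exact (abs_lt.2 ⟨hp.1.1, hp.1.2⟩).le
      · exact hp.2
    set SS : Set (Lp ℂ 2 (volume.restrict ϖ)) :=
      {u | ∃ s ∈ A2ext ϖ (PiDom ϖ) a b 0, ⇑u =ᵐ[volume.restrict ϖ] s} with hSSdef
    obtain ⟨D, hDc, hDd⟩ := TopologicalSpace.exists_countable_dense (↥SS)
    set Gen : Set (Lp ℂ 2 ((volume.restrict (Ioo (-Real.pi) Real.pi)).prod
        (volume.restrict ϖ))) :=
      {u | ∃ (E : Set ℝ) (s : ℂ → ℂ) (_ : MeasurableSet E) (_ : s ∈ A2ext ϖ (PiDom ϖ) a b 0)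
        (hm : MemLp (fun p : ℝ × ℂ => E.indicator (fun _ => (1:ℂ)) p.1 * s p.2) 2
          ((volume.restrict (Ioo (-Real.pi) Real.pi)).prod (volume.restrict ϖ))),
        u = hm.toLp _} with hGendef
    set K := Submodule.span ℂ Gen with hKdef
    set x := hGL.toLp G with hxdef
    have hxK : x ∈ Kᗮᗮ := by
      rw [Submodule.mem_orthogonal]
      intro w hw
      have hw' : ∀ u ∈ K, (inner ℂ u w : ℂ) = 0 := (Submodule.mem_orthogonal K w).1 hw
      have hwL : MemLp (⇑w) 2
          ((volume.restrict (Ioo (-Real.pi) Real.pi)).prod (volume.restrict ϖ)) :=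
        Lp.memLp w
      have horth : ∀ v : Lp ℂ 2 (volume.restrict ϖ), v ∈ SS → ∀ E : Set ℝ, MeasurableSet E →
          ∫ η in E, (∫ z, (starRingEnd ℂ) (w (η, z)) * v z ∂(volume.restrict ϖ))
            ∂(volume.restrict (Ioo (-Real.pi) Real.pi)) = 0 := by
        rintro v ⟨s, hsA, hsae⟩ E hE
        have hsL : MemLp s 2 (volume.restrict ϖ) := hsA.1.2
        have hmgen : MemLp (fun p : ℝ × ℂ => E.indicator (fun _ => (1:ℂ)) p.1 * s p.2) 2
            ((volume.restrict (Ioo (-Real.pi) Real.pi)).prod (volume.restrict ϖ)) :=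
          memLp_genFun hsL hE
        have hgenK : hmgen.toLp _ ∈ K := Submodule.subset_span ⟨E, s, hE, hsA, hmgen, rfl⟩
        have h0 : (inner ℂ w (hmgen.toLp _) : ℂ) = 0 := inner_eq_zero_symm.2 (hw' _ hgenK)
        rw [MeasureTheory.L2.inner_def] at h0
        have h0' : ∫ p, (starRingEnd ℂ) (w p) * (E.indicator (fun _ => (1:ℂ)) p.1 * s p.2)
            ∂((volume.restrict (Ioo (-Real.pi) Real.pi)).prod (volume.restrict ϖ)) = 0 := by
          refine Eq.trans ?_ h0
          refine integral_congr_ae ?_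
          filter_upwards [hmgen.coeFn_toLp] with p hp
          rw [RCLike.inner_apply', hp]
        have hfull : Integrable (fun p : ℝ × ℂ => (starRingEnd ℂ) (w p) * s p.2)
            ((volume.restrict (Ioo (-Real.pi) Real.pi)).prod (volume.restrict ϖ)) := by
          have h1 := MeasureTheory.L2.integrable_inner (𝕜 := ℂ) w ((memLp_snd hsL).toLp _)
          refine h1.congr ?_
          filter_upwards [MemLp.coeFn_toLp (memLp_snd hsL)] with p hp
          rw [RCLike.inner_apply', hp]
        have hcut : Integrable
            (fun p : ℝ × ℂ =>
              (starRingEnd ℂ) (w p) * (E.indicator (fun _ => (1:ℂ)) p.1 * s p.2))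
            ((volume.restrict (Ioo (-Real.pi) Real.pi)).prod (volume.restrict ϖ)) := by
          refine Integrable.mono' hfull.norm ?_ ?_
          · refine AEStronglyMeasurable.mul ?_ (AEStronglyMeasurable.mul ?_
              (hsL.aestronglyMeasurable.comp_snd))
            · exact RCLike.continuous_conj.comp_aestronglyMeasurable (Lp.aestronglyMeasurable w)
            · exact (((measurable_const (a := (1:ℂ))).indicator hE).comp
                measurable_fst).aestronglyMeasurable
          · refine Eventually.of_forall fun p => ?_
            by_cases h : p.1 ∈ E <;>
              simp [Set.indicator_apply, h, norm_mul, norm_nonneg, mul_nonneg]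
        have hiter : ∫ p, (starRingEnd ℂ) (w p) * (E.indicator (fun _ => (1:ℂ)) p.1 * s p.2)
              ∂((volume.restrict (Ioo (-Real.pi) Real.pi)).prod (volume.restrict ϖ))
            = ∫ η in E, (∫ z, (starRingEnd ℂ) (w (η, z)) * s z ∂(volume.restrict ϖ))
              ∂(volume.restrict (Ioo (-Real.pi) Real.pi)) := by
          rw [MeasureTheory.integral_prod _ hcut]
          calc ∫ η, (∫ z, (starRingEnd ℂ) (w (η, z)) * (E.indicator (fun _ => (1:ℂ)) η * s z)
                ∂(volume.restrict ϖ)) ∂(volume.restrict (Ioo (-Real.pi) Real.pi))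
              = ∫ η, E.indicator
                  (fun η' => ∫ z, (starRingEnd ℂ) (w (η', z)) * s z ∂(volume.restrict ϖ)) η
                  ∂(volume.restrict (Ioo (-Real.pi) Real.pi)) := by
                refine integral_congr_ae (Eventually.of_forall fun η => ?_)
                by_cases h : η ∈ E
                · simp only [Set.indicator_of_mem h, one_mul]
                · simp [Set.indicator_of_notMem h]
            _ = ∫ η in E, (∫ z, (starRingEnd ℂ) (w (η, z)) * s z ∂(volume.restrict ϖ))
                  ∂(volume.restrict (Ioo (-Real.pi) Real.pi)) := integral_indicator hE
        have hVs : ∀ η : ℝ, (∫ z, (starRingEnd ℂ) (w (η, z)) * v z ∂(volume.restrict ϖ))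
            = ∫ z, (starRingEnd ℂ) (w (η, z)) * s z ∂(volume.restrict ϖ) := by
          intro η
          refine integral_congr_ae ?_
          filter_upwards [hsae] with z hz
          rw [hz]
        simp_rw [hVs]
        rw [← hiter]
        exact h0'
      have hvanish : ∀ v : Lp ℂ 2 (volume.restrict ϖ), v ∈ SS →
          (fun η => ∫ z, (starRingEnd ℂ) (w (η, z)) * v z ∂(volume.restrict ϖ))
            =ᵐ[volume.restrict (Ioo (-Real.pi) Real.pi)] 0 := by
        intro v hv
        have hvL : MemLp (⇑v) 2 (volume.restrict ϖ) := Lp.memLp v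
        have hfull : Integrable (fun p : ℝ × ℂ => (starRingEnd ℂ) (w p) * v p.2)
            ((volume.restrict (Ioo (-Real.pi) Real.pi)).prod (volume.restrict ϖ)) := by
          have h1 := MeasureTheory.L2.integrable_inner (𝕜 := ℂ) w ((memLp_snd hvL).toLp _)
          refine h1.congr ?_
          filter_upwards [MemLp.coeFn_toLp (memLp_snd hvL)] with p hp
          rw [RCLike.inner_apply', hp]
        have hint : Integrable
            (fun η => ∫ z, (starRingEnd ℂ) (w (η, z)) * v z ∂(volume.restrict ϖ))
            (volume.restrict (Ioo (-Real.pi) Real.pi)) := hfull.integral_prod_left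
        refine hint.ae_eq_zero_of_forall_setIntegral_eq_zero ?_
        intro E hE _
        exact horth v hv E hE
      have hvanishD : ∀ᵐ η ∂(volume.restrict (Ioo (-Real.pi) Real.pi)), ∀ d ∈ D,
          ∫ z, (starRingEnd ℂ) (w (η, z)) * (d : ↥SS).val z ∂(volume.restrict ϖ) = 0 := by
        rw [ae_ball_iff hDc]
        intro d hd
        filter_upwards [hvanish d.val d.2] with η hη using hη
      have hWsl := memLp_slice hwL
      have hGsl := memLp_slice hGL
      have hgeta : ∀ᵐ η ∂(volume.restrict (Ioo (-Real.pi) Real.pi)),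
          (fun z => g (η, z)) ∈ A2eta ϖ (PiDom ϖ) a b η :=
        hg2.filter_mono (ae_mono (Measure.restrict_mono Ioo_subset_Icc_self le_rfl))
      have hIoo : ∀ᵐ η ∂(volume.restrict (Ioo (-Real.pi) Real.pi)),
          η ∈ Ioo (-Real.pi) Real.pi := ae_restrict_mem measurableSet_Ioo
      have hmain : (fun η => ∫ z, (starRingEnd ℂ) (w (η, z)) * G (η, z) ∂(volume.restrict ϖ))
          =ᵐ[volume.restrict (Ioo (-Real.pi) Real.pi)] 0 := by
        filter_upwards [hvanishD, hWsl, hGsl, hgeta, hIoo] with η hD0 hWη hGη hA hη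
        have hGcl : hGη.toLp _ ∈ closure (Subtype.val '' D) := by
          rw [Metric.mem_closure_iff]
          intro r hr
          obtain ⟨g', hg'A, hg'int⟩ :=
            hA.2 ((r/2)^2 / Real.exp (Real.pi * M)^2) (by positivity)
          set s : ℂ → ℂ := fun z => Complex.exp ((((-η : ℝ)):ℂ) * Complex.I * z) * g' z
            with hsdef
          have hsA0 : s ∈ A2ext ϖ (PiDom ϖ) a b 0 := by
            have h := A2ext_twist hϖ (-η) hg'A
            rwa [add_neg_cancel] at h
          have hsL : MemLp s 2 (volume.restrict ϖ) := hsA0.1.2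
          have hg'L : MemLp g' 2 (volume.restrict ϖ) := hg'A.1.2
          have hgηL : MemLp (fun z => g (η, z)) 2 (volume.restrict ϖ) := hA.1.2
          have hkey : ∫ z, ‖G (η, z) - s z‖^2 ∂(volume.restrict ϖ) < (r/2)^2 := by
            have hpt : ∀ z ∈ ϖ, ‖G (η, z) - s z‖^2
                ≤ Real.exp (Real.pi * M)^2 * ‖g (η, z) - g' z‖^2 := by
              intro z hz
              have h1 : G (η, z) - s z
                  = Complex.exp ((((-η : ℝ)):ℂ) * Complex.I * z) * (g (η, z) - g' z) := by
                simp only [hGdef, hsdef]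
                push_cast
                ring
              rw [h1, norm_mul, mul_pow]
              have h2 := hbd (-η) (by rw [abs_neg]; exact (abs_lt.2 ⟨hη.1, hη.2⟩).le) z hz
              have h3 : ‖Complex.exp ((((-η : ℝ)):ℂ) * Complex.I * z)‖^2
                  ≤ Real.exp (Real.pi * M)^2 := pow_le_pow_left₀ (norm_nonneg _) h2 2
              exact mul_le_mul_of_nonneg_right h3 (by positivity)
            calc ∫ z, ‖G (η, z) - s z‖^2 ∂(volume.restrict ϖ)
                ≤ ∫ z, Real.exp (Real.pi * M)^2 * ‖g (η, z) - g' z‖^2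
                    ∂(volume.restrict ϖ) := by
                  refine integral_mono_of_nonneg
                    (Eventually.of_forall fun z => by positivity)
                    ((integrable_sq_of_memLp2 (hgηL.sub hg'L)).const_mul _) ?_
                  filter_upwards [ae_restrict_mem hϖm] with z hz using hpt z hz
              _ = Real.exp (Real.pi * M)^2
                    * ∫ z, ‖g (η, z) - g' z‖^2 ∂(volume.restrict ϖ) :=
                  integral_const_mul _ _
              _ < Real.exp (Real.pi * M)^2
                    * ((r/2)^2 / Real.exp (Real.pi * M)^2) :=
                  mul_lt_mul_of_pos_left hg'int hC2pos
              _ = (r/2)^2 := by field_simp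
          have hsSS : hsL.toLp s ∈ SS := ⟨s, hsA0, hsL.coeFn_toLp⟩
          obtain ⟨d, hdball, hdD⟩ :=
            Metric.dense_iff.1 hDd ⟨hsL.toLp s, hsSS⟩ (r/2) (by positivity)
          refine ⟨(d : ↥SS).val, mem_image_of_mem _ hdD, ?_⟩
          have hd1 : dist (hGη.toLp _) (hsL.toLp s) < r/2 := by
            rw [dist_eq_norm]
            have h4 := norm_toLp_sub_sq hGη hsL
            nlinarith [norm_nonneg (hGη.toLp _ - hsL.toLp s), hkey]
          have hd2 : dist (hsL.toLp s) (d : ↥SS).val < r/2 := by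
            have := Metric.mem_ball.1 hdball
            rw [Subtype.dist_eq] at this
            rw [dist_comm] at this
            exact this
          calc dist (hGη.toLp _) (d : ↥SS).val
              ≤ dist (hGη.toLp _) (hsL.toLp s) + dist (hsL.toLp s) (d : ↥SS).val :=
                dist_triangle _ _ _
            _ < r/2 + r/2 := add_lt_add hd1 hd2
            _ = r := by ring
        have hker : ∀ u ∈ closure (Subtype.val '' D),
            (inner ℂ (hWη.toLp _) u : ℂ) = 0 := by
          have hclosed : IsClosed {u : Lp ℂ 2 (volume.restrict ϖ) |
              (inner ℂ (hWη.toLp _) u : ℂ) = 0} :=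
            isClosed_eq (Continuous.inner continuous_const continuous_id) continuous_const
          intro u hu
          refine closure_minimal ?_ hclosed hu
          rintro u' ⟨d, hd, rfl⟩
          show (inner ℂ (hWη.toLp _) (d : ↥SS).val : ℂ) = 0
          rw [MeasureTheory.L2.inner_def]
          rw [← hD0 d hd]
          refine integral_congr_ae ?_
          filter_upwards [hWη.coeFn_toLp] with z hz
          rw [RCLike.inner_apply', hz]
        have h3 : (inner ℂ (hWη.toLp _) (hGη.toLp _) : ℂ) = 0 := hker _ hGcl
        have h4 : ∫ z, (starRingEnd ℂ) (w (η, z)) * G (η, z) ∂(volume.restrict ϖ) = 0 := by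
          rw [← h3, MeasureTheory.L2.inner_def]
          refine integral_congr_ae ?_
          filter_upwards [hWη.coeFn_toLp, hGη.coeFn_toLp] with z h5 h6
          rw [RCLike.inner_apply', h5, h6]
        simpa using h4
      have hwx : Integrable (fun p => (starRingEnd ℂ) (w p) * G p)
          ((volume.restrict (Ioo (-Real.pi) Real.pi)).prod (volume.restrict ϖ)) := by
        have h1 := MeasureTheory.L2.integrable_inner (𝕜 := ℂ) w x
        refine h1.congr ?_
        filter_upwards [hGL.coeFn_toLp] with p hp
        rw [RCLike.inner_apply', hxdef, hp]
      rw [MeasureTheory.L2.inner_def]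
      have h5 : ∫ p, (inner ℂ (w p) (x p) : ℂ)
            ∂((volume.restrict (Ioo (-Real.pi) Real.pi)).prod (volume.restrict ϖ))
          = ∫ p, (starRingEnd ℂ) (w p) * G p
            ∂((volume.restrict (Ioo (-Real.pi) Real.pi)).prod (volume.restrict ϖ)) := by
        refine integral_congr_ae ?_
        filter_upwards [hGL.coeFn_toLp] with p hp
        rw [RCLike.inner_apply', hxdef, hp]
      rw [h5, MeasureTheory.integral_prod _ hwx, integral_congr_ae hmain]
      simp
    rw [Submodule.orthogonal_orthogonal_eq_closure] at hxK
    have hxcl : x ∈ closure (K : Set (Lp ℂ 2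
        ((volume.restrict (Ioo (-Real.pi) Real.pi)).prod (volume.restrict ϖ)))) := by
      rw [← Submodule.topologicalClosure_coe]
      exact hxK
    have hδpos : 0 < Real.sqrt (ε / (2 * Real.exp (Real.pi * M)^2)) :=
      Real.sqrt_pos.2 (by positivity)
    have hδsq : Real.sqrt (ε / (2 * Real.exp (Real.pi * M)^2)) ^ 2
        = ε / (2 * Real.exp (Real.pi * M)^2) := Real.sq_sqrt (le_of_lt (by positivity))
    obtain ⟨y, hyK, hxy⟩ := Metric.mem_closure_iff.1 hxcl _ hδpos
    have hyT : ∃ H : ℝ × ℂ → ℂ,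
        (∃ hm : MemLp H 2
          ((volume.restrict (Ioo (-Real.pi) Real.pi)).prod (volume.restrict ϖ)),
            y = hm.toLp H) ∧
        ∀ η : ℝ, (fun z => H (η, z)) ∈ A2ext ϖ (PiDom ϖ) a b 0 := by
      refine Submodule.span_induction ?_ ?_ ?_ ?_ hyK
      · rintro u ⟨E, s, hE, hsA, hm, rfl⟩
        refine ⟨_, ⟨hm, rfl⟩, fun η => ?_⟩
        exact A2ext_smul (E.indicator (fun _ => (1:ℂ)) η) hsA
      · exact ⟨fun _ => 0, ⟨MemLp.zero', (MemLp.toLp_zero _).symm⟩, fun η => A2ext_zero⟩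
      · rintro u₁ u₂ hu₁ hu₂ ⟨H₁, ⟨hm₁, rfl⟩, hs₁⟩ ⟨H₂, ⟨hm₂, rfl⟩, hs₂⟩
        exact ⟨H₁ + H₂, ⟨hm₁.add hm₂, (MemLp.toLp_add hm₁ hm₂).symm⟩,
          fun η => A2ext_add (hs₁ η) (hs₂ η)⟩
      · rintro c u hu ⟨H₁, ⟨hm₁, rfl⟩, hs₁⟩
        exact ⟨c • H₁, ⟨hm₁.const_smul c, (MemLp.toLp_const_smul c hm₁).symm⟩,
          fun η => A2ext_smul c (hs₁ η)⟩
    obtain ⟨H, ⟨hmH, hyH⟩, hHsl⟩ := hyT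
    have hGH : ∫ p, ‖G p - H p‖^2
        ∂((volume.restrict (Ioo (-Real.pi) Real.pi)).prod (volume.restrict ϖ))
        < ε / (2 * Real.exp (Real.pi * M)^2) := by
      rw [hyH] at hxy
      rw [dist_eq_norm] at hxy
      have h2 := norm_toLp_sub_sq hGL hmH
      rw [← hxdef] at h2
      rw [← h2, ← hδsq]
      nlinarith [norm_nonneg (x - hmH.toLp H), hxy, hδpos]
    set hfun : ℝ × ℂ → ℂ := fun p => Complex.exp ((p.1:ℂ) * Complex.I * p.2) * H p
      with hhdef
    have hconte2 : Continuous fun p : ℝ × ℂ => Complex.exp ((p.1:ℂ) * Complex.I * p.2) := by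
      apply Complex.continuous_exp.comp
      exact ((Complex.continuous_ofReal.comp continuous_fst).mul continuous_const).mul
        continuous_snd
    have hfunL : MemLp hfun 2
        ((volume.restrict (Ioo (-Real.pi) Real.pi)).prod (volume.restrict ϖ)) := by
      refine memLp_mul_of_bound hmH hconte2.aestronglyMeasurable
        (C := Real.exp (Real.pi * M)) ?_
      filter_upwards [memPm] with p hp
      exact hbd p.1 (abs_lt.2 ⟨hp.1.1, hp.1.2⟩).le p.2 hp.2
    refine ⟨hfun, ⟨?_, ?_⟩, ?_⟩
    · rw [measeq]
      exact hfunL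
    · refine Eventually.of_forall fun η => ?_
      have h := A2ext_twist hϖ η (hHsl η)
      rw [zero_add] at h
      exact h
    · have hptw : ∀ p : ℝ × ℂ, g p - hfun p
          = Complex.exp ((p.1:ℂ) * Complex.I * p.2) * (G p - H p) := by
        intro p
        have h1 : Complex.exp ((p.1:ℂ) * Complex.I * p.2)
            * Complex.exp (-(p.1:ℂ) * Complex.I * p.2) = 1 := by
          rw [← Complex.exp_add,
            show (p.1:ℂ) * Complex.I * p.2 + -(p.1:ℂ) * Complex.I * p.2 = 0 by ring,
            Complex.exp_zero]
        simp only [hGdef, hhdef]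
        beta_reduce
        linear_combination (-(g p)) * h1
      have hint2 : Integrable (fun p => Real.exp (Real.pi * M)^2 * ‖G p - H p‖^2)
          ((volume.restrict (Ioo (-Real.pi) Real.pi)).prod (volume.restrict ϖ)) :=
        (integrable_sq_of_memLp2 (hGL.sub hmH)).const_mul _
      have key : (∫ p in (Ioo (-Real.pi) Real.pi) ×ˢ ϖ, ‖g p - hfun p‖ ^ 2)
          = ∫ p, ‖g p - hfun p‖ ^ 2
            ∂((volume.restrict (Ioo (-Real.pi) Real.pi)).prod (volume.restrict ϖ)) := by
        rw [measeq]
      rw [key]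
      calc ∫ p, ‖g p - hfun p‖ ^ 2
            ∂((volume.restrict (Ioo (-Real.pi) Real.pi)).prod (volume.restrict ϖ))
          ≤ ∫ p, Real.exp (Real.pi * M)^2 * ‖G p - H p‖^2
            ∂((volume.restrict (Ioo (-Real.pi) Real.pi)).prod (volume.restrict ϖ)) := by
            refine integral_mono_of_nonneg (Eventually.of_forall fun p => by positivity)
              hint2 ?_
            filter_upwards [memPm] with p hp
            rw [hptw p, norm_mul, mul_pow]
            refine mul_le_mul_of_nonneg_right ?_ (by positivity)
            exact pow_le_pow_left₀ (norm_nonneg _)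
              (hbd p.1 (abs_lt.2 ⟨hp.1.1, hp.1.2⟩).le p.2 hp.2) 2
        _ = Real.exp (Real.pi * M)^2 * ∫ p, ‖G p - H p‖^2
            ∂((volume.restrict (Ioo (-Real.pi) Real.pi)).prod (volume.restrict ϖ)) :=
            integral_const_mul _ _
        _ < Real.exp (Real.pi * M)^2 * (ε / (2 * Real.exp (Real.pi * M)^2)) :=
            mul_lt_mul_of_pos_left hGH hC2pos
        _ = ε / 2 := by field_simp
        _ < ε := by linarith

end Main

end
end
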